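/- arXiv:2209.14273 — 4 statements merged into one kernel-verified Lean document; each statement's English description precedes it below -/
import Mathlib

section
/- Let V be a finite-dimensional real vector space and let Φ ∪ Ψ be a (possibly infinite, locally finite) family of affine functions defining a hyperplane arrangement on V with chamber set Ch. For chambers C, C', let Φ⁺_C denote the set of functions positive on C, etc. Then for chambers C, C', C'' one has d(C, C'') = d(C, C') + d(C', C'') if and only if Φ⁺_C ∩ Φ⁺_{C''} ⊆ Φ⁺_{C'} ⊆ Φ⁺_C ∪ Φ⁺_{C''} and similarly for Ψ, where d counts the number of walls separating two chambers. -/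
/-! **Statement 3.** Combinatorics of chambers of an affine hyperplane arrangement:
`d(C, C'') = d(C, C') + d(C', C'')` iff
`Φ⁺_C ∩ Φ⁺_{C''} ⊆ Φ⁺_{C'} ⊆ Φ⁺_C ∪ Φ⁺_{C''}` and similarly for `Ψ`. -/

namespace Stmt3

variable {V : Type*} [NormedAddCommGroup V] [NormedSpace ℝ V]

/-- The affine function `φ` is (strictly) positive on the set `C`. -/
def Pos (C : Set V) (φ : V →ᵃ[ℝ] ℝ) : Prop := ∀ x ∈ C, 0 < φ x

/-- The affine function `φ` is (strictly) negative on the set `C`. -/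
def Neg (C : Set V) (φ : V →ᵃ[ℝ] ℝ) : Prop := ∀ x ∈ C, φ x < 0

/-- The set of walls from the family `Θ` separating `C` from `C'`. -/
def Sep (Θ : Set (V →ᵃ[ℝ] ℝ)) (C C' : Set V) : Set (V →ᵃ[ℝ] ℝ) :=
  {φ ∈ Θ | (Pos C φ ∧ Neg C' φ) ∨ (Neg C φ ∧ Pos C' φ)}

/-- The set `Θ⁺_C` of functions from `Θ` which are positive on `C`. -/
def PosSet (Θ : Set (V →ᵃ[ℝ] ℝ)) (C : Set V) : Set (V →ᵃ[ℝ] ℝ) :=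
  {φ ∈ Θ | Pos C φ}

/-- `C` is a chamber of the arrangement defined by the family `Θ` of affine functions:
a connected component of the complement of the union of their zero loci. -/
def IsChamber (Θ : Set (V →ᵃ[ℝ] ℝ)) (C : Set V) : Prop :=
  ∃ x ∈ {y : V | ∀ φ ∈ Θ, φ y ≠ 0}, C = connectedComponentIn {y : V | ∀ φ ∈ Θ, φ y ≠ 0} x

lemma chamber_nonempty {Θ : Set (V →ᵃ[ℝ] ℝ)} {C : Set V} (h : IsChamber Θ C) : C.Nonempty := by
  obtain ⟨x, hx, rfl⟩ := h
  exact ⟨x, mem_connectedComponentIn hx⟩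

lemma pos_or_neg [FiniteDimensional ℝ V] {Θ : Set (V →ᵃ[ℝ] ℝ)} {C : Set V}
    (h : IsChamber Θ C) {φ : V →ᵃ[ℝ] ℝ} (hφ : φ ∈ Θ) : Pos C φ ∨ Neg C φ := by
  obtain ⟨x, hx, rfl⟩ := h
  set S := {y : V | ∀ ψ ∈ Θ, ψ y ≠ 0} with hS
  have hsub : connectedComponentIn S x ⊆ S := connectedComponentIn_subset S x
  by_contra hcon
  rw [not_or] at hcon
  obtain ⟨hp, hn⟩ := hcon
  simp only [Pos] at hp
  simp only [Neg] at hn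
  push_neg at hp hn
  obtain ⟨a, ha, hale⟩ := hp
  obtain ⟨b, hb, hble⟩ := hn
  have hφa : φ a < 0 := lt_of_le_of_ne hale (hsub ha φ hφ)
  have hφb : 0 < φ b := lt_of_le_of_ne hble (Ne.symm (hsub hb φ hφ))
  have hcont : Continuous φ := φ.continuous_of_finiteDimensional
  have himg : IsPreconnected (φ '' connectedComponentIn S x) :=
    (isPreconnected_connectedComponentIn).image φ hcont.continuousOn
  have h0 : (0:ℝ) ∈ φ '' connectedComponentIn S x := by
    have := himg.ordConnected.out (Set.mem_image_of_mem φ ha) (Set.mem_image_of_mem φ hb)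
    exact this ⟨hφa.le, hφb.le⟩
  obtain ⟨c, hc, hc0⟩ := h0
  exact hsub hc φ hφ hc0

lemma neg_iff_not_pos [FiniteDimensional ℝ V] {Θ : Set (V →ᵃ[ℝ] ℝ)} {C : Set V}
    (h : IsChamber Θ C) {φ : V →ᵃ[ℝ] ℝ} (hφ : φ ∈ Θ) : Neg C φ ↔ ¬ Pos C φ := by
  obtain ⟨y, hy⟩ := chamber_nonempty h
  constructor
  · intro hn hp
    exact absurd (hp y hy) (not_lt.mpr (hn y hy).le)
  · intro hnp
    rcases pos_or_neg h hφ with h' | h'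
    · exact absurd h' hnp
    · exact h'

/-- Let `Φ ∪ Ψ` be a (locally finite) family of affine functions on a
finite-dimensional real vector space `V`, defining a hyperplane arrangement, and let
`C, C', C''` be chambers.  (Local finiteness is used through the hypothesis that the sets of
separating walls between the chambers under consideration are finite.)  Letting
`d(D, D')` denote the number of walls separating `D` and `D'`, one has
`d(C, C'') = d(C, C') + d(C', C'')` if and only if
`Φ⁺_C ∩ Φ⁺_{C''} ⊆ Φ⁺_{C'} ⊆ Φ⁺_C ∪ Φ⁺_{C''}` and similarly for `Ψ`. -/
theorem dist_add_iff_between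
    [FiniteDimensional ℝ V]
    (Φ Ψ : Set (V →ᵃ[ℝ] ℝ)) (C C' C'' : Set V)
    (hC : IsChamber (Φ ∪ Ψ) C) (hC' : IsChamber (Φ ∪ Ψ) C') (hC'' : IsChamber (Φ ∪ Ψ) C'')
    (h1 : (Sep (Φ ∪ Ψ) C C').Finite) (h2 : (Sep (Φ ∪ Ψ) C' C'').Finite)
    (h3 : (Sep (Φ ∪ Ψ) C C'').Finite) :
    (Sep (Φ ∪ Ψ) C C'').ncard = (Sep (Φ ∪ Ψ) C C').ncard + (Sep (Φ ∪ Ψ) C' C'').ncard ↔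
      ((PosSet Φ C ∩ PosSet Φ C'' ⊆ PosSet Φ C' ∧ PosSet Φ C' ⊆ PosSet Φ C ∪ PosSet Φ C'') ∧
       (PosSet Ψ C ∩ PosSet Ψ C'' ⊆ PosSet Ψ C' ∧ PosSet Ψ C' ⊆ PosSet Ψ C ∪ PosSet Ψ C'')) := by
  set Θ := Φ ∪ Ψ with hΘ
  set A := Sep Θ C C' with hA
  set B := Sep Θ C' C'' with hB
  have memsep : ∀ (X Y : Set V), IsChamber Θ X → IsChamber Θ Y → ∀ φ,
      φ ∈ Sep Θ X Y ↔ φ ∈ Θ ∧ ¬(Pos X φ ↔ Pos Y φ) := by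
    intro X Y hX hY φ
    constructor
    · rintro ⟨hφ, h⟩
      have nX := neg_iff_not_pos hX hφ
      have nY := neg_iff_not_pos hY hφ
      exact ⟨hφ, by tauto⟩
    · rintro ⟨hφ, h⟩
      have nX := neg_iff_not_pos hX hφ
      have nY := neg_iff_not_pos hY hφ
      refine ⟨hφ, ?_⟩
      rcases pos_or_neg hX hφ with hx | hx <;> rcases pos_or_neg hY hφ with hy | hy <;> tauto
  have hDsd : Sep Θ C C'' = (A ∪ B) \ (A ∩ B) := by
    ext φ
    by_cases hφ : φ ∈ Θ
    · simp only [Set.mem_diff, Set.mem_union, Set.mem_inter_iff, hA, hB,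
        memsep C C'' hC hC'' φ, memsep C C' hC hC' φ, memsep C' C'' hC' hC'' φ]
      tauto
    · constructor
      · rintro ⟨h, -⟩; exact absurd h hφ
      · rintro ⟨h, -⟩
        rcases h with h | h <;> exact absurd h.1 hφ
  have hI : (A ∩ B).Finite := h1.inter_of_left B
  have hAB : (A ∪ B).Finite := h1.union h2
  have hsub : A ∩ B ⊆ A ∪ B := Set.inter_subset_left.trans Set.subset_union_left
  have card1 : (Sep Θ C C'').ncard = (A ∪ B).ncard - (A ∩ B).ncard := by
    rw [hDsd, Set.ncard_diff hsub hI]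
  have card2 : (A ∪ B).ncard + (A ∩ B).ncard = A.ncard + B.ncard :=
    Set.ncard_union_add_ncard_inter A B h1 h2
  have hle : (A ∩ B).ncard ≤ (A ∪ B).ncard := Set.ncard_le_ncard hsub hAB
  have keycard : ((Sep Θ C C'').ncard = A.ncard + B.ncard ↔ (A ∩ B).ncard = 0) := by
    rw [card1]; omega
  rw [keycard, Set.ncard_eq_zero hI]
  -- Now: A ∩ B = ∅ ↔ betweenness
  constructor
  · intro he
    have hni : ∀ φ, φ ∉ A ∩ B := fun φ h => by rw [he] at h; exact h
    constructor
    all_goals constructor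
    · rintro φ ⟨⟨hφΦ, hpC⟩, ⟨-, hpC''⟩⟩
      have hφ : φ ∈ Θ := Or.inl hφΦ
      refine ⟨hφΦ, ?_⟩
      by_contra hnp
      have hneg : Neg C' φ := (neg_iff_not_pos hC' hφ).mpr hnp
      exact hni φ ⟨⟨hφ, Or.inl ⟨hpC, hneg⟩⟩, ⟨hφ, Or.inr ⟨hneg, hpC''⟩⟩⟩
    · rintro φ ⟨hφΦ, hpC'⟩
      have hφ : φ ∈ Θ := Or.inl hφΦ
      by_contra hn
      simp only [Set.mem_union, PosSet, Set.mem_setOf_eq, not_or, not_and] at hn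
      have hnC : Neg C φ := (neg_iff_not_pos hC hφ).mpr (hn.1 hφΦ)
      have hnC'' : Neg C'' φ := (neg_iff_not_pos hC'' hφ).mpr (hn.2 hφΦ)
      exact hni φ ⟨⟨hφ, Or.inr ⟨hnC, hpC'⟩⟩, ⟨hφ, Or.inl ⟨hpC', hnC''⟩⟩⟩
    · rintro φ ⟨⟨hφΨ, hpC⟩, ⟨-, hpC''⟩⟩
      have hφ : φ ∈ Θ := Or.inr hφΨ
      refine ⟨hφΨ, ?_⟩
      by_contra hnp
      have hneg : Neg C' φ := (neg_iff_not_pos hC' hφ).mpr hnp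
      exact hni φ ⟨⟨hφ, Or.inl ⟨hpC, hneg⟩⟩, ⟨hφ, Or.inr ⟨hneg, hpC''⟩⟩⟩
    · rintro φ ⟨hφΨ, hpC'⟩
      have hφ : φ ∈ Θ := Or.inr hφΨ
      by_contra hn
      simp only [Set.mem_union, PosSet, Set.mem_setOf_eq, not_or, not_and] at hn
      have hnC : Neg C φ := (neg_iff_not_pos hC hφ).mpr (hn.1 hφΨ)
      have hnC'' : Neg C'' φ := (neg_iff_not_pos hC'' hφ).mpr (hn.2 hφΨ)
      exact hni φ ⟨⟨hφ, Or.inr ⟨hnC, hpC'⟩⟩, ⟨hφ, Or.inl ⟨hpC', hnC''⟩⟩⟩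
  · rintro ⟨⟨hΦ1, hΦ2⟩, ⟨hΨ1, hΨ2⟩⟩
    rw [Set.eq_empty_iff_forall_notMem]
    rintro φ ⟨⟨hφΘ, hAφ⟩, ⟨-, hBφ⟩⟩
    have nC := neg_iff_not_pos hC hφΘ
    have nC' := neg_iff_not_pos hC' hφΘ
    have nC'' := neg_iff_not_pos hC'' hφΘ
    have h1' := @hΦ1 φ
    have h2' := @hΦ2 φ
    have h3' := @hΨ1 φ
    have h4' := @hΨ2 φ
    simp only [Set.mem_inter_iff, Set.mem_union, PosSet, Set.mem_setOf_eq] at h1' h2' h3' h4'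
    rw [nC, nC'] at hAφ
    rw [nC', nC''] at hBφ
    rcases hφΘ with hφ | hφ
    · rcases hAφ with ⟨hp, hn'⟩ | ⟨hn, hp'⟩
      · rcases hBφ with ⟨hp', _⟩ | ⟨_, hp''⟩
        · exact hn' hp'
        · exact hn' (h1' ⟨⟨hφ, hp⟩, ⟨hφ, hp''⟩⟩).2
      · rcases hBφ with ⟨hp', hn''⟩ | ⟨hn', _⟩
        · rcases h2' ⟨hφ, hp'⟩ with ⟨_, h⟩ | ⟨_, h⟩
          · exact hn h
          · exact hn'' h
        · exact hn' hp'
    · rcases hAφ with ⟨hp, hn'⟩ | ⟨hn, hp'⟩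
      · rcases hBφ with ⟨hp', _⟩ | ⟨_, hp''⟩
        · exact hn' hp'
        · exact hn' (h3' ⟨⟨hφ, hp⟩, ⟨hφ, hp''⟩⟩).2
      · rcases hBφ with ⟨hp', hn''⟩ | ⟨hn', _⟩
        · rcases h4' ⟨hφ, hp'⟩ with ⟨_, h⟩ | ⟨_, h⟩
          · exact hn h
          · exact hn'' h
        · exact hn' hp'
end Stmt3
end

section
/- Let V be a finite-dimensional euclidean affine space, L ⊂ V a lattice acting by translations with compact quotient Q. Let p₀, p₁ ∈ V and ε > 0 be such that the open balls B_ε(p₀) and B_ε(p₁) are disjoint from a given L-invariant locally finite hyperplane arrangement's walls (i.e. contained in open chambers C₀, C₁). If ‖p₁ − p₀‖/ε ≥ Vol(Q)/Vol(B_{ε/2}(p₀)) + 1, then there exists a nonzero lattice vector v ∈ L and a point p₂ ∈ (C₀ + v) ∩ [p₀, p₁]. -/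
open MeasureTheory
open Metric

set_option maxHeartbeats 1000000

/-- Let `V` be a finite-dimensional euclidean space (here modelled as
`EuclideanSpace ℝ (Fin n)`), `L ⊂ V` a full-rank lattice acting by translations with compact
quotient `Q` (so that `Vol(Q)` is the covolume of `L`).  Let a locally finite, `L`-invariant
hyperplane arrangement be given by a family `Θ` of affine functions whose union of zero loci
is `W`.  Let `p₀, p₁ ∈ V` and `ε > 0` be such that the open balls `B_ε(p₀)` and `B_ε(p₁)` are
disjoint from the walls, being contained in open chambers `C₀`, `C₁`.  If
`‖p₁ − p₀‖ / ε ≥ Vol(Q) / Vol(B_{ε/2}(p₀)) + 1` then there exist a nonzero lattice vector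
`v ∈ L` and a point `p₂ ∈ (C₀ + v) ∩ [p₀, p₁]`. -/
theorem exists_lattice_translate_chamber_meets_segment
    (n : ℕ) (L : Submodule ℤ (EuclideanSpace ℝ (Fin n)))
    [DiscreteTopology L] [IsZLattice ℝ L]
    (Θ : Set (EuclideanSpace ℝ (Fin n) →ᵃ[ℝ] ℝ))
    (W : Set (EuclideanSpace ℝ (Fin n)))
    (hW : W = {x | ∃ φ ∈ Θ, φ x = 0})
    (hWinv : ∀ v ∈ L, (fun x => x + v) '' W = W)
    (C₀ C₁ : Set (EuclideanSpace ℝ (Fin n)))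
    (p₀ p₁ : EuclideanSpace ℝ (Fin n)) (ε : ℝ) (hε : 0 < ε)
    (hC₀ : p₀ ∈ Wᶜ ∧ C₀ = connectedComponentIn Wᶜ p₀)
    (hC₁ : p₁ ∈ Wᶜ ∧ C₁ = connectedComponentIn Wᶜ p₁)
    (hb₀ : Metric.ball p₀ ε ⊆ C₀) (hb₁ : Metric.ball p₁ ε ⊆ C₁)
    (hvol : ZLattice.covolume L volume / (volume (Metric.ball p₀ (ε / 2))).toReal + 1
      ≤ ‖p₁ - p₀‖ / ε) :
    ∃ v ∈ L, v ≠ 0 ∧ ∃ p₂ ∈ segment ℝ p₀ p₁, p₂ ∈ (fun x => x + v) '' C₀ := by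
  set D := ‖p₁ - p₀‖ with hDdef
  set vB := volume (Metric.ball p₀ (ε / 2)) with hvB
  have hvB0 : 0 < vB := measure_ball_pos _ _ (by linarith)
  have hvBfin : vB ≠ ⊤ := measure_ball_lt_top.ne
  have hr : 0 < vB.toReal := ENNReal.toReal_pos hvB0.ne' hvBfin
  have hcov : 0 < ZLattice.covolume L volume := ZLattice.covolume_pos L volume
  have h1 : 1 ≤ D / ε := le_trans (by have := div_nonneg hcov.le (ENNReal.toReal_nonneg (a := vB)); linarith) hvol
  have hDε : ε ≤ D := by rw [le_div_iff₀ hε] at h1; linarith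
  have hD0 : 0 < D := lt_of_lt_of_le hε hDε
  set m := ⌊D / ε⌋₊ with hm
  have hmle : (m : ℝ) ≤ D / ε := Nat.floor_le (by positivity)
  have hmlt : D / ε < m + 1 := Nat.lt_floor_add_one _
  set u := D⁻¹ • (p₁ - p₀) with hu
  have hunorm : ‖u‖ = 1 := by
    rw [hu, norm_smul, norm_inv, Real.norm_eq_abs, abs_of_pos hD0, inv_mul_cancel₀ hD0.ne']
  set c := fun k : ℕ => p₀ + ((k : ℝ) * ε) • u with hc
  have hcsub : ∀ j k : ℕ, c j - c k = (((j : ℝ) - k) * ε) • u := by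
    intro j k
    simp [hc, add_sub_add_left_eq_sub, ← sub_smul, sub_mul]
  have hdist : ∀ j k : ℕ, j ≠ k → ε ≤ dist (c j) (c k) := by
    intro j k hjk
    rw [dist_eq_norm, hcsub, norm_smul, hunorm, mul_one, Real.norm_eq_abs, abs_mul,
      abs_of_pos hε]
    have h2 : (1:ℝ) ≤ |(j:ℝ) - k| := by
      have h3 : (j:ℝ) - k ≠ 0 := sub_ne_zero.mpr (by exact_mod_cast hjk)
      rcases lt_or_gt_of_ne h3 with h | h
      · rw [abs_of_neg h]
        have : (j:ℝ) + 1 ≤ k := by exact_mod_cast Nat.succ_le_of_lt (by exact_mod_cast (by nlinarith : (j:ℝ) < k))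
        linarith
      · rw [abs_of_pos h]
        have : (k:ℝ) + 1 ≤ j := by exact_mod_cast Nat.succ_le_of_lt (by exact_mod_cast (by nlinarith : (k:ℝ) < j))
        linarith
    nlinarith
  -- the union of balls
  set s := ⋃ k ∈ Finset.range (m + 1), ball (c k) (ε / 2) with hs
  have hsmeas : MeasurableSet s :=
    MeasurableSet.biUnion (Finset.range (m + 1)).countable_toSet
      (fun _ _ => measurableSet_ball)
  have hvols : volume s = (m + 1) * vB := by
    rw [hs, measure_biUnion_finset]
    · have heach : ∀ k : ℕ, volume (ball (c k) (ε / 2)) = vB := by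
        intro k
        rw [hvB, Measure.addHaar_ball_center volume (c k), Measure.addHaar_ball_center volume p₀]
      simp_rw [heach, Finset.sum_const, Finset.card_range, nsmul_eq_mul]
      push_cast; ring
    · intro j hj k hk hjk
      exact ball_disjoint_ball (by linarith [hdist j k hjk])
    · exact fun _ _ => measurableSet_ball
  -- Blichfeldt
  let b := Module.Free.chooseBasis ℤ L
  have fund := ZLattice.isAddFundamentalDomain b (volume (α := EuclideanSpace ℝ (Fin n)))
  have hFfin : volume (ZSpan.fundamentalDomain (b.ofZLatticeBasis ℝ)) ≠ ⊤ :=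
    (ZSpan.fundamentalDomain_isBounded _).measure_lt_top.ne
  have hcoveq : ZLattice.covolume L volume
      = (volume (ZSpan.fundamentalDomain (b.ofZLatticeBasis ℝ))).toReal :=
    ZLattice.covolume_eq_measure_fundamentalDomain L volume fund
  have hsfin : (↑(m + 1) : ENNReal) * vB ≠ ⊤ :=
    ENNReal.mul_ne_top (ENNReal.natCast_ne_top _) hvBfin
  have hlt : volume (ZSpan.fundamentalDomain (b.ofZLatticeBasis ℝ)) < volume s := by
    rw [hvols]
    have h4 : ZLattice.covolume L volume < ((m : ℝ) + 1) * vB.toReal := by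
      have h5 : ZLattice.covolume L volume / vB.toReal < (m : ℝ) + 1 := by linarith
      calc ZLattice.covolume L volume
          = ZLattice.covolume L volume / vB.toReal * vB.toReal := by field_simp
        _ < ((m : ℝ) + 1) * vB.toReal := by nlinarith
    have h6 : ((↑(m + 1) : ENNReal) * vB).toReal = ((m : ℝ) + 1) * vB.toReal := by
      rw [ENNReal.toReal_mul]
      norm_num
      left
      rw [ENNReal.toReal_add (ENNReal.natCast_ne_top m) ENNReal.one_ne_top,
        ENNReal.toReal_one, ENNReal.toReal_natCast]
    rw [← ENNReal.toReal_lt_toReal hFfin (by exact_mod_cast hsfin)]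
    rw [show ((m : ENNReal) + 1) * vB = (↑(m + 1) : ENNReal) * vB by push_cast; ring, h6]
    rw [← hcoveq]
    exact h4
  have : MeasurableVAdd L (EuclideanSpace ℝ (Fin n)) :=
    (inferInstance : MeasurableVAdd L.toAddSubgroup (EuclideanSpace ℝ (Fin n)))
  have : VAddInvariantMeasure L (EuclideanSpace ℝ (Fin n)) volume :=
    (inferInstance : VAddInvariantMeasure L.toAddSubgroup (EuclideanSpace ℝ (Fin n)) volume)
  obtain ⟨x, y, hxy, hnd⟩ :=
    exists_pair_mem_lattice_not_disjoint_vadd (L := L) fund hsmeas.nullMeasurableSet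
      (by rw [hvols] at hlt ⊢; exact_mod_cast hlt)
  obtain ⟨z, hz1, hz2⟩ := Set.not_disjoint_iff.mp hnd
  obtain ⟨a, ha, haz⟩ := hz1
  obtain ⟨b', hb', hbz⟩ := hz2
  -- key lemma
  have key : ∀ (j k : ℕ) (a b' : EuclideanSpace ℝ (Fin n)), k ≤ j → j ≤ m →
      a ∈ ball (c j) (ε / 2) → b' ∈ ball (c k) (ε / 2) → a - b' ∈ L → a - b' ≠ 0 →
      ∃ v ∈ L, v ≠ 0 ∧ ∃ p₂ ∈ segment ℝ p₀ p₁, p₂ ∈ (fun x => x + v) '' C₀ := by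
    intro j k a b' hkj hjm haj hbk hvL hvne
    refine ⟨a - b', hvL, hvne, c (j - k), ?_, ?_⟩
    · rw [segment_eq_image']
      refine ⟨((j - k : ℕ) : ℝ) * ε / D, ⟨by positivity, ?_⟩, ?_⟩
      · have h7 : ((j - k : ℕ) : ℝ) ≤ m := by exact_mod_cast le_trans (Nat.sub_le j k) hjm
        have h9 : (m : ℝ) * ε ≤ D := (le_div_iff₀ hε).mp hmle
        have h8 : ((j - k : ℕ) : ℝ) * ε ≤ D := by nlinarith
        rw [div_le_one hD0]; exact h8
      · show p₀ + (((j - k : ℕ) : ℝ) * ε / D) • (p₁ - p₀) = c (j - k)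
        simp only [hc, hu]
        match_scalars
        all_goals ring
    · have hnrm : ‖c (j - k) - (a - b') - p₀‖ < ε := by
        have e1 : c (j - k) - p₀ = c j - c k := by
          rw [hcsub]
          simp only [hc, add_sub_cancel_left]
          congr 1
          rw [Nat.cast_sub hkj]
        have e2 : c (j - k) - (a - b') - p₀ = (c j - a) - (c k - b') := by
          have := e1
          rw [sub_right_comm, e1]; abel
        rw [e2]
        have d1 : ‖c j - a‖ < ε / 2 := by
          rw [← dist_eq_norm, dist_comm]; exact mem_ball.mp haj
        have d2 : ‖c k - b'‖ < ε / 2 := by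
          rw [← dist_eq_norm, dist_comm]; exact mem_ball.mp hbk
        calc ‖(c j - a) - (c k - b')‖ ≤ ‖c j - a‖ + ‖c k - b'‖ := norm_sub_le _ _
          _ < ε := by linarith
      refine ⟨c (j - k) - (a - b'), hb₀ ?_, sub_add_cancel _ _⟩
      rw [mem_ball, dist_eq_norm]
      exact hnrm
  -- extract indices
  simp only [hs, Set.mem_iUnion, Finset.mem_range, exists_prop] at ha hb'
  obtain ⟨j, hj, haj⟩ := ha
  obtain ⟨k, hk, hbk⟩ := hb'
  have hxyv : a - b' = (y : EuclideanSpace ℝ (Fin n)) - x := by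
    have : (x : EuclideanSpace ℝ (Fin n)) + a = (y : EuclideanSpace ℝ (Fin n)) + b' := by
      rw [← haz] at hbz
      exact hbz.symm
    exact sub_eq_sub_iff_add_eq_add.mpr (by rw [add_comm a]; exact this)
  have hvL : a - b' ∈ L := by rw [hxyv]; exact sub_mem y.2 x.2
  have hvne : a - b' ≠ 0 := by
    rw [hxyv, sub_ne_zero]
    exact fun h => hxy (Subtype.ext h.symm)
  rcases le_total k j with hkj | hjk
  · exact key j k a b' hkj (by omega) haj hbk hvL hvne
  · refine key k j b' a hjk (by omega) hbk haj ?_ ?_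
    · rw [show b' - a = -(a - b') by abel]; exact neg_mem hvL
    · rw [show b' - a = -(a - b') by abel]; exact neg_ne_zero.mpr hvne
end

section
/- In the trigonometric double affine Hecke algebra H_c of type A₁, the elements s₁ and s₀ generate a subgroup of the unit group isomorphic to the infinite dihedral group, and the assignment x ↦ degree-1 generator yields a vector-space decomposition H_c ≅ ℂ[x] ⊗ ℂ[D_∞], where D_∞ = ⟨s₀, s₁ : s₀² = s₁² = 1⟩. -/
/-! **Statement 9.**  PBW property for the type `A₁` trigonometric DAHA:  `s₁` and `s₀`
generate a copy of the infinite dihedral group `D_∞ = ⟨s₀, s₁ | s₀² = s₁² = 1⟩ ≅ C₂ ∗ C₂`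
inside (the units of) `H_c`, and `{xⁿ·w : n ∈ ℕ, w ∈ D_∞}` is a `ℂ`-basis of `H_c`;
equivalently the multiplication map `ℂ[x] ⊗ ℂ[D_∞] → H_c` is a linear isomorphism. -/

namespace Stmt9

open FreeAlgebra

abbrev F := FreeAlgebra ℂ (Fin 3)

/-- Defining relations of the type `A₁` trigonometric DAHA `H_c`. -/
inductive DahaRel (c : ℂ) : F → F → Prop
  | s1_sq : DahaRel c (ι ℂ 1 * ι ℂ 1) 1
  | s0_sq : DahaRel c (ι ℂ 2 * ι ℂ 2) 1
  | rel1 : DahaRel c (ι ℂ 1 * ι ℂ 0 + ι ℂ 0 * ι ℂ 1) (algebraMap ℂ F c)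
  | rel0 : DahaRel c (ι ℂ 2 * ι ℂ 0 - (1 - ι ℂ 0) * ι ℂ 2 + algebraMap ℂ F c) 0

/-- The trigonometric DAHA of type `A₁` with parameter `c`. -/
abbrev H (c : ℂ) := RingQuot (DahaRel c)

noncomputable def X (c : ℂ) : H c := RingQuot.mkRingHom (DahaRel c) (ι ℂ 0)
noncomputable def S₁ (c : ℂ) : H c := RingQuot.mkRingHom (DahaRel c) (ι ℂ 1)
noncomputable def S₀ (c : ℂ) : H c := RingQuot.mkRingHom (DahaRel c) (ι ℂ 2)

/-- The infinite dihedral group, presented as the free product `C₂ ∗ C₂`. -/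
abbrev Dinf := Monoid.Coprod (Multiplicative (ZMod 2)) (Multiplicative (ZMod 2))

open Polynomial
noncomputable section

abbrev R := Polynomial ℂ

def t1 (p : R) : R := p.comp (-Polynomial.X)
def t0 (p : R) : R := p.comp (1 - Polynomial.X)
def d1 (p : R) : R := C (2⁻¹ : ℂ) * ((p - t1 p) /ₘ Polynomial.X)
def d0 (p : R) : R := C (2⁻¹ : ℂ) * ((t0 p - p) /ₘ (Polynomial.X - C 2⁻¹))

lemma m1_ne : (2 * Polynomial.X : R) ≠ 0 := by
  intro h
  have := congrArg (Polynomial.eval (1 : ℂ)) h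
  norm_num at this

lemma m0_ne : (2 * Polynomial.X - 1 : R) ≠ 0 := by
  intro h
  have := congrArg (Polynomial.eval (1 : ℂ)) h
  norm_num at this

lemma two_C : (2 : R) * C (2⁻¹ : ℂ) = 1 := by
  rw [← map_ofNat (C : ℂ →+* R) 2, ← C_mul]
  norm_num

lemma d1_def (p : R) : (2 * Polynomial.X) * d1 p = p - p.comp (-Polynomial.X) := by
  have hdvd : (Polynomial.X : R) ∣ (p - t1 p) := by
    rw [Polynomial.X_dvd_iff]
    simp [t1, Polynomial.coeff_zero_eq_eval_zero, Polynomial.eval_comp]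
  have h := Polynomial.modByMonic_add_div (p - t1 p) (Polynomial.X)
  rw [(Polynomial.modByMonic_eq_zero_iff_dvd Polynomial.monic_X).mpr hdvd, zero_add] at h
  calc (2 * Polynomial.X : R) * d1 p = (2 * C 2⁻¹) * (Polynomial.X * ((p - t1 p) /ₘ Polynomial.X)) := by rw [d1]; ring
  _ = p - p.comp (-Polynomial.X) := by rw [two_C, one_mul, h, t1]

lemma d0_def (p : R) : (2 * Polynomial.X - 1) * d0 p = p.comp (1 - Polynomial.X) - p := by
  have hdvd : (Polynomial.X - C 2⁻¹ : R) ∣ (t0 p - p) := by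
    rw [Polynomial.dvd_iff_isRoot]
    simp [Polynomial.IsRoot, t0, Polynomial.eval_comp]
    norm_num
  have h := Polynomial.modByMonic_add_div (t0 p - p) (Polynomial.X - C (2⁻¹ : ℂ))
  rw [(Polynomial.modByMonic_eq_zero_iff_dvd (Polynomial.monic_X_sub_C _)).mpr hdvd,
    zero_add] at h
  have e : (2 * Polynomial.X - 1 : R) = 2 * (Polynomial.X - C 2⁻¹) := by
    rw [mul_sub, two_C]
  calc (2 * Polynomial.X - 1 : R) * d0 p
      = (2 * C 2⁻¹) * ((Polynomial.X - C 2⁻¹) * ((t0 p - p) /ₘ (Polynomial.X - C 2⁻¹))) := by rw [d0, e]; ring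
  _ = p.comp (1 - Polynomial.X) - p := by rw [two_C, one_mul, h, t0]

lemma t1_t1 (p : R) : t1 (t1 p) = p := by
  simp [t1, Polynomial.comp_assoc, Polynomial.neg_comp, Polynomial.X_comp]

lemma t0_t0 (p : R) : t0 (t0 p) = p := by
  simp [t0, Polynomial.comp_assoc, Polynomial.sub_comp, Polynomial.one_comp,
    Polynomial.X_comp, sub_sub_cancel]

lemma t1_d1 (p : R) : t1 (d1 p) = d1 p := by
  apply mul_left_cancel₀ m1_ne
  have h := congrArg (fun q : R => q.comp (-Polynomial.X)) (d1_def p)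
  simp only [Polynomial.mul_comp, Polynomial.sub_comp, Polynomial.X_comp,
    Polynomial.comp_assoc, Polynomial.neg_comp, Polynomial.comp_X, neg_neg,
    Polynomial.ofNat_comp] at h
  have h2 := d1_def p
  simp only [t1]
  linear_combination -h2 - h

lemma t0_d0 (p : R) : t0 (d0 p) = d0 p := by
  apply mul_left_cancel₀ m0_ne
  have h := congrArg (fun q : R => q.comp (1 - Polynomial.X)) (d0_def p)
  simp only [Polynomial.mul_comp, Polynomial.sub_comp, Polynomial.X_comp,
    Polynomial.comp_assoc, Polynomial.one_comp, Polynomial.comp_X, sub_sub_cancel,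
    Polynomial.ofNat_comp] at h
  have h2 := d0_def p
  simp only [t0]
  linear_combination -h2 - h

lemma d1_d1 (p : R) : d1 (d1 p) = 0 := by
  apply mul_left_cancel₀ m1_ne
  have h := d1_def (d1 p)
  have h2 := t1_d1 p
  simp only [t1] at h2
  rw [h, h2]; ring

lemma d0_d0 (p : R) : d0 (d0 p) = 0 := by
  apply mul_left_cancel₀ m0_ne
  have h := d0_def (d0 p)
  have h2 := t0_d0 p
  simp only [t0] at h2
  rw [h, h2]; ring

lemma t1_one : t1 (1 : R) = 1 := Polynomial.one_comp
lemma t0_one : t0 (1 : R) = 1 := Polynomial.one_comp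

lemma d1_one : d1 (1 : R) = 0 := by
  apply mul_left_cancel₀ m1_ne
  rw [d1_def]; simp

lemma d0_one : d0 (1 : R) = 0 := by
  apply mul_left_cancel₀ m0_ne
  rw [d0_def]; simp

lemma t1_X_mul (p : R) : t1 (Polynomial.X * p) = -(Polynomial.X * t1 p) := by
  simp [t1, Polynomial.mul_comp, Polynomial.X_comp]

lemma t0_X_mul (p : R) : t0 (Polynomial.X * p) = (1 - Polynomial.X) * t0 p := by
  simp [t0, Polynomial.mul_comp, Polynomial.X_comp]

lemma d1_X_mul (p : R) : d1 (Polynomial.X * p) = p - Polynomial.X * d1 p := by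
  apply mul_left_cancel₀ m1_ne
  have h := d1_def (Polynomial.X * p)
  have h2 := d1_def p
  simp only [Polynomial.mul_comp, Polynomial.X_comp] at h
  rw [h]
  linear_combination Polynomial.X * h2

lemma d0_X_mul (p : R) : d0 (Polynomial.X * p) = (1 - Polynomial.X) * d0 p - p := by
  apply mul_left_cancel₀ m0_ne
  have h := d0_def (Polynomial.X * p)
  have h2 := d0_def p
  simp only [Polynomial.mul_comp, Polynomial.X_comp] at h
  rw [h]
  linear_combination (Polynomial.X - 1) * h2

lemma t1_add (p q : R) : t1 (p + q) = t1 p + t1 q := Polynomial.add_comp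
lemma t0_add (p q : R) : t0 (p + q) = t0 p + t0 q := Polynomial.add_comp
lemma t1_smul (s : ℂ) (p : R) : t1 (s • p) = s • t1 p := Polynomial.smul_comp s p _
lemma t0_smul (s : ℂ) (p : R) : t0 (s • p) = s • t0 p := Polynomial.smul_comp s p _

lemma d1_add (p q : R) : d1 (p + q) = d1 p + d1 q := by
  apply mul_left_cancel₀ m1_ne
  have h := d1_def (p + q)
  simp only [Polynomial.add_comp] at h
  rw [h, mul_add, d1_def, d1_def]; ring

lemma d0_add (p q : R) : d0 (p + q) = d0 p + d0 q := by
  apply mul_left_cancel₀ m0_ne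
  have h := d0_def (p + q)
  simp only [Polynomial.add_comp] at h
  rw [h, mul_add, d0_def, d0_def]; ring

lemma d1_smul (s : ℂ) (p : R) : d1 (s • p) = s • d1 p := by
  apply mul_left_cancel₀ m1_ne
  have h := d1_def (s • p)
  simp only [Polynomial.smul_comp] at h
  rw [h, mul_smul_comm, d1_def, smul_sub]

lemma d0_smul (s : ℂ) (p : R) : d0 (s • p) = s • d0 p := by
  apply mul_left_cancel₀ m0_ne
  have h := d0_def (s • p)
  simp only [Polynomial.smul_comp] at h
  rw [h, mul_smul_comm, d0_def, smul_sub]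

end
open Polynomial
noncomputable section Rep

abbrev M := Dinf →₀ R

def ga : Dinf := Monoid.Coprod.inl (Multiplicative.ofAdd 1)
def gb : Dinf := Monoid.Coprod.inr (Multiplicative.ofAdd 1)

lemma ga_ga : ga * ga = 1 := by
  rw [ga, ← map_mul]
  have : (Multiplicative.ofAdd (1 : ZMod 2)) * (Multiplicative.ofAdd 1) = 1 := by decide
  rw [this, map_one]

lemma gb_gb : gb * gb = 1 := by
  rw [gb, ← map_mul]
  have : (Multiplicative.ofAdd (1 : ZMod 2)) * (Multiplicative.ofAdd 1) = 1 := by decide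
  rw [this, map_one]

def T1 : R →ₗ[ℂ] R := ⟨⟨t1, t1_add⟩, t1_smul⟩
def T0 : R →ₗ[ℂ] R := ⟨⟨t0, t0_add⟩, t0_smul⟩
def D1 : R →ₗ[ℂ] R := ⟨⟨d1, d1_add⟩, d1_smul⟩
def D0 : R →ₗ[ℂ] R := ⟨⟨d0, d0_add⟩, d0_smul⟩

def Xhat : M →ₗ[ℂ] M := Finsupp.mapRange.linearMap (LinearMap.mulLeft ℂ (Polynomial.X : R))

def S1hat (c : ℂ) : M →ₗ[ℂ] M :=
  Finsupp.lsum ℂ fun w =>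
    (Finsupp.lsingle (ga * w)).comp T1 + c • ((Finsupp.lsingle w).comp D1)

def S0hat (c : ℂ) : M →ₗ[ℂ] M :=
  Finsupp.lsum ℂ fun w =>
    (Finsupp.lsingle (gb * w)).comp T0 + c • ((Finsupp.lsingle w).comp D0)

lemma Xhat_single (w : Dinf) (p : R) :
    Xhat (Finsupp.single w p) = Finsupp.single w (Polynomial.X * p) := by
  simp [Xhat]

lemma S1hat_single (c : ℂ) (w : Dinf) (p : R) :
    S1hat c (Finsupp.single w p) =
      Finsupp.single (ga * w) (t1 p) + c • Finsupp.single w (d1 p) := by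
  rw [S1hat, Finsupp.lsum_single]
  simp [T1, D1]

lemma S0hat_single (c : ℂ) (w : Dinf) (p : R) :
    S0hat c (Finsupp.single w p) =
      Finsupp.single (gb * w) (t0 p) + c • Finsupp.single w (d0 p) := by
  rw [S0hat, Finsupp.lsum_single]
  simp [T0, D0]

lemma S1hat_sq (c : ℂ) : S1hat c * S1hat c = 1 := by
  apply Finsupp.lhom_ext
  intro w p
  show S1hat c (S1hat c (Finsupp.single w p)) = Finsupp.single w p
  rw [S1hat_single, map_add, map_smul, S1hat_single, S1hat_single]
  rw [← mul_assoc, ga_ga, one_mul, t1_t1]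
  have h1 : d1 (t1 p) = -d1 p := by
    apply mul_left_cancel₀ m1_ne
    rw [d1_def]
    have := t1_t1 p
    simp only [t1] at this ⊢
    rw [this]
    have h2 := d1_def p
    linear_combination h2
  have h2 : t1 (d1 p) = d1 p := t1_d1 p
  rw [h1, h2, d1_d1]
  simp [smul_add, Finsupp.smul_single, smul_smul]

lemma S0hat_sq (c : ℂ) : S0hat c * S0hat c = 1 := by
  apply Finsupp.lhom_ext
  intro w p
  show S0hat c (S0hat c (Finsupp.single w p)) = Finsupp.single w p
  rw [S0hat_single, map_add, map_smul, S0hat_single, S0hat_single]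
  rw [← mul_assoc, gb_gb, one_mul, t0_t0]
  have h1 : d0 (t0 p) = -d0 p := by
    apply mul_left_cancel₀ m0_ne
    rw [d0_def]
    have := t0_t0 p
    simp only [t0] at this ⊢
    rw [this]
    have h2 := d0_def p
    linear_combination h2
  have h2 : t0 (d0 p) = d0 p := t0_d0 p
  rw [h1, h2, d0_d0]
  simp [smul_add, Finsupp.smul_single, smul_smul]

lemma S1hat_rel (c : ℂ) :
    S1hat c * Xhat + Xhat * S1hat c = algebraMap ℂ (Module.End ℂ M) c := by
  apply Finsupp.lhom_ext
  intro w p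
  show S1hat c (Xhat (Finsupp.single w p)) + Xhat (S1hat c (Finsupp.single w p)) =
    (algebraMap ℂ (Module.End ℂ M) c) (Finsupp.single w p)
  rw [Xhat_single, S1hat_single, S1hat_single, map_add, map_smul, Xhat_single, Xhat_single]
  rw [t1_X_mul, d1_X_mul]
  have : (algebraMap ℂ (Module.End ℂ M) c) (Finsupp.single w p) = c • Finsupp.single w p := by
    simp [Module.algebraMap_end_apply]
  rw [this]
  simp only [smul_sub, smul_add, smul_neg, Finsupp.smul_single, Finsupp.single_neg,
    Finsupp.single_sub, Finsupp.single_add, mul_smul_comm, smul_smul]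
  abel

lemma S0hat_rel (c : ℂ) :
    S0hat c * Xhat - (1 - Xhat) * S0hat c + algebraMap ℂ (Module.End ℂ M) c = 0 := by
  apply Finsupp.lhom_ext
  intro w p
  show S0hat c (Xhat (Finsupp.single w p)) - (S0hat c (Finsupp.single w p) -
      Xhat (S0hat c (Finsupp.single w p))) +
      (algebraMap ℂ (Module.End ℂ M) c) (Finsupp.single w p) = 0
  rw [Xhat_single, S0hat_single, S0hat_single, map_add, map_smul, Xhat_single, Xhat_single]
  rw [t0_X_mul, d0_X_mul]
  have : (algebraMap ℂ (Module.End ℂ M) c) (Finsupp.single w p) = c • Finsupp.single w p := by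
    simp [Module.algebraMap_end_apply]
  rw [this]
  rw [show ((1 - Polynomial.X) * t0 p : R) = t0 p - Polynomial.X * t0 p by ring,
    show ((1 - Polynomial.X) * d0 p - p : R) = d0 p - Polynomial.X * d0 p - p by ring]
  simp only [smul_sub, smul_add, smul_neg, Finsupp.smul_single, Finsupp.single_neg,
    Finsupp.single_sub, Finsupp.single_add, mul_smul_comm, smul_smul]
  abel

end Rep
noncomputable section Alg
open Polynomial

def rho (c : ℂ) : F →ₐ[ℂ] Module.End ℂ M :=
  FreeAlgebra.lift ℂ ![Xhat, S1hat c, S0hat c]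

lemma rho_i0 (c : ℂ) : rho c (ι ℂ 0) = Xhat := by
  simp [rho]

lemma rho_i1 (c : ℂ) : rho c (ι ℂ 1) = S1hat c := by
  simp [rho]

lemma rho_i2 (c : ℂ) : rho c (ι ℂ 2) = S0hat c := by
  simp [rho]

lemma rel_holds (c : ℂ) : ∀ ⦃x y : F⦄, DahaRel c x y → rho c x = rho c y := by
  intro x y h
  induction h with
  | s1_sq => rw [map_mul, map_one, rho_i1]; exact S1hat_sq c
  | s0_sq => rw [map_mul, map_one, rho_i2]; exact S0hat_sq c
  | rel1 =>
    rw [map_add, map_mul, map_mul, rho_i0, rho_i1, AlgHom.commutes]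
    exact S1hat_rel c
  | rel0 =>
    rw [map_add, map_sub, map_mul, map_mul, map_sub, map_one, map_zero, rho_i0, rho_i2,
      AlgHom.commutes]
    exact S0hat_rel c

def rhoH (c : ℂ) : H c →ₐ[ℂ] Module.End ℂ M :=
  RingQuot.liftAlgHom ℂ ⟨rho c, rel_holds c⟩

lemma mk_eq (c : ℂ) (f : F) :
    RingQuot.mkRingHom (DahaRel c) f = RingQuot.mkAlgHom ℂ (DahaRel c) f := by
  rw [← RingQuot.mkAlgHom_coe ℂ]
  rfl

lemma rhoH_mk (c : ℂ) (f : F) :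
    rhoH c (RingQuot.mkRingHom (DahaRel c) f) = rho c f := by
  rw [mk_eq, rhoH, RingQuot.liftAlgHom_mkAlgHom_apply]

lemma rhoH_X (c : ℂ) : rhoH c (X c) = Xhat := by rw [X, rhoH_mk, rho_i0]
lemma rhoH_S1 (c : ℂ) : rhoH c (S₁ c) = S1hat c := by rw [S₁, rhoH_mk, rho_i1]
lemma rhoH_S0 (c : ℂ) : rhoH c (S₀ c) = S0hat c := by rw [S₀, rhoH_mk, rho_i2]

lemma mk_algebraMap (c a : ℂ) :
    RingQuot.mkRingHom (DahaRel c) (algebraMap ℂ F a) = algebraMap ℂ (H c) a := by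
  rw [mk_eq]
  exact (RingQuot.mkAlgHom ℂ (DahaRel c)).commutes a

/- Relations in `H c`. -/
lemma s1_sq' (c : ℂ) : S₁ c * S₁ c = 1 := by
  have h := RingQuot.mkRingHom_rel (DahaRel.s1_sq (c := c))
  rw [map_mul, map_one] at h
  exact h

lemma s0_sq' (c : ℂ) : S₀ c * S₀ c = 1 := by
  have h := RingQuot.mkRingHom_rel (DahaRel.s0_sq (c := c))
  rw [map_mul, map_one] at h
  exact h

lemma rel1' (c : ℂ) : S₁ c * X c = algebraMap ℂ (H c) c - X c * S₁ c := by
  have h := RingQuot.mkRingHom_rel (DahaRel.rel1 (c := c))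
  rw [map_add, map_mul, map_mul, mk_algebraMap] at h
  rw [eq_sub_iff_add_eq]
  exact h

lemma rel0' (c : ℂ) : S₀ c * X c = S₀ c - X c * S₀ c - algebraMap ℂ (H c) c := by
  have h := RingQuot.mkRingHom_rel (DahaRel.rel0 (c := c))
  rw [map_add, map_sub, map_mul, map_mul, map_sub, map_one, map_zero, mk_algebraMap] at h
  rw [sub_mul, one_mul] at h
  rw [sub_sub, eq_sub_iff_add_eq, ← sub_eq_zero]
  have e : S₀ c * X c + (X c * S₀ c + algebraMap ℂ (H c) c) - S₀ c
      = S₀ c * X c - (S₀ c - X c * S₀ c) + algebraMap ℂ (H c) c := by abel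
  rw [e]
  exact h

/- The monoid homomorphism from the infinite dihedral group. -/
def invo {G : Type*} [Monoid G] (u : G) (hu : u * u = 1) : Multiplicative (ZMod 2) →* G where
  toFun g := if Multiplicative.toAdd g = 0 then 1 else u
  map_one' := by simp
  map_mul' a b := by
    have key : ∀ x : ZMod 2, x = 0 ∨ x = 1 := by decide
    have h10 : (1 : ZMod 2) ≠ 0 := by decide
    have h11 : (1 + 1 : ZMod 2) = 0 := by decide
    rcases key (Multiplicative.toAdd a) with ha | ha <;>
      rcases key (Multiplicative.toAdd b) with hb | hb <;>
      simp [toAdd_mul, ha, hb, h10, h11, hu]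

def phi (c : ℂ) : Dinf →* H c :=
  Monoid.Coprod.lift (invo (S₁ c) (s1_sq' c)) (invo (S₀ c) (s0_sq' c))

lemma phi_inl (c : ℂ) : phi c (Monoid.Coprod.inl (Multiplicative.ofAdd (1 : ZMod 2))) = S₁ c := by
  rw [phi, Monoid.Coprod.lift_apply_inl]
  simp [invo]

lemma phi_inr (c : ℂ) : phi c (Monoid.Coprod.inr (Multiplicative.ofAdd (1 : ZMod 2))) = S₀ c := by
  rw [phi, Monoid.Coprod.lift_apply_inr]
  simp [invo]

lemma Xhat_pow (n : ℕ) (w : Dinf) (p : R) :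
    (Xhat ^ n) (Finsupp.single w p) = Finsupp.single w ((Polynomial.X : R) ^ n * p) := by
  induction n with
  | zero => simp
  | succ n ih =>
    rw [pow_succ', Module.End.mul_apply, ih, Xhat_single, pow_succ']
    ring_nf

lemma act (c : ℂ) (w : Dinf) :
    ∀ v : Dinf, rhoH c (phi c w) (Finsupp.single v (1 : R)) = Finsupp.single (w * v) 1 := by
  induction w using Monoid.Coprod.induction_on with
  | inl m =>
    rcases (by decide :
        ∀ x : Multiplicative (ZMod 2), x = 1 ∨ x = Multiplicative.ofAdd 1) m with h | h <;>
      subst h <;> intro v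
    · rw [map_one, map_one]
      simp
    · rw [phi_inl, rhoH_S1, S1hat_single, t1_one, d1_one]
      simp [ga]
  | inr m =>
    rcases (by decide :
        ∀ x : Multiplicative (ZMod 2), x = 1 ∨ x = Multiplicative.ofAdd 1) m with h | h <;>
      subst h <;> intro v
    · rw [map_one, map_one]
      simp
    · rw [phi_inr, rhoH_S0, S0hat_single, t0_one, d0_one]
      simp [gb]
  | mul x y hx hy =>
    intro v
    rw [map_mul, map_mul, Module.End.mul_apply, hy, hx, mul_assoc]

def Ev (c : ℂ) : H c →ₗ[ℂ] M where
  toFun h := rhoH c h (Finsupp.single 1 1)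
  map_add' a b := by simp [map_add]
  map_smul' r a := by simp [map_smul]

lemma Ev_key (c : ℂ) (n : ℕ) (w : Dinf) :
    Ev c (X c ^ n * phi c w) = Finsupp.single w ((Polynomial.X : R) ^ n) := by
  show rhoH c (X c ^ n * phi c w) (Finsupp.single 1 1) = _
  rw [map_mul, map_pow, rhoH_X, Module.End.mul_apply, act c w 1, mul_one, Xhat_pow, mul_one]

lemma li (c : ℂ) : LinearIndependent ℂ (fun p : ℕ × Dinf => X c ^ p.1 * phi c p.2) := by
  have hB : LinearIndependent ℂ
      (fun q : ℕ × Dinf => (Finsupp.single q.2 ((Polynomial.X : R) ^ q.1) : M)) := by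
    have hb := (Finsupp.basis (fun _ : Dinf => Polynomial.basisMonomials ℂ)).linearIndependent
    have h2 := hb.comp (fun q : ℕ × Dinf => (⟨q.2, q.1⟩ : Σ _ : Dinf, ℕ))
      (fun a b hab => by
        obtain ⟨ha, hb'⟩ := Sigma.mk.inj_iff.mp hab
        exact Prod.ext (by exact_mod_cast heq_iff_eq.mp hb') ha)
    convert h2 using 1
    funext q
    simp [Finsupp.coe_basis, Polynomial.coe_basisMonomials, Function.comp,
      Polynomial.X_pow_eq_monomial]
  apply LinearIndependent.of_comp (Ev c)
  have : (⇑(Ev c) ∘ fun p : ℕ × Dinf => X c ^ p.1 * phi c p.2) =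
      fun q : ℕ × Dinf => (Finsupp.single q.2 ((Polynomial.X : R) ^ q.1) : M) :=
    funext fun q => Ev_key c q.1 q.2
  rw [this]
  exact hB

end Alg
noncomputable section Span

def L (c : ℂ) : Submodule ℂ (H c) :=
  Submodule.span ℂ (Set.range fun p : ℕ × Dinf => X c ^ p.1 * phi c p.2)

lemma mem_L (c : ℂ) (n : ℕ) (w : Dinf) : X c ^ n * phi c w ∈ L c :=
  Submodule.subset_span ⟨(n, w), rfl⟩

lemma L_mulX (c : ℂ) : ∀ m ∈ L c, X c * m ∈ L c := by
  intro m hm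
  induction hm using Submodule.span_induction with
  | mem x hx =>
    obtain ⟨⟨n, w⟩, rfl⟩ := hx
    have e : X c * (X c ^ n * phi c w) = X c ^ (n + 1) * phi c w := by
      rw [pow_succ', mul_assoc]
    rw [e]
    exact mem_L c (n + 1) w
  | zero => simpa using (L c).zero_mem
  | add x y _ _ hx hy => rw [mul_add]; exact add_mem hx hy
  | smul a x _ hx => rw [mul_smul_comm]; exact Submodule.smul_mem _ a hx

lemma S1_pow_mem (c : ℂ) (n : ℕ) (w : Dinf) : S₁ c * (X c ^ n * phi c w) ∈ L c := by
  induction n with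
  | zero =>
    rw [pow_zero, one_mul]
    have e : S₁ c * phi c w = X c ^ 0 * phi c (ga * w) := by
      rw [pow_zero, one_mul, map_mul]
      have : phi c ga = S₁ c := phi_inl c
      rw [this]
    rw [e]
    exact mem_L c 0 (ga * w)
  | succ n ih =>
    have e : X c ^ (n + 1) * phi c w = X c * (X c ^ n * phi c w) := by
      rw [pow_succ', mul_assoc]
    rw [e, ← mul_assoc, rel1', sub_mul, mul_assoc]
    refine sub_mem ?_ (L_mulX c _ ih)
    rw [← Algebra.smul_def]
    exact Submodule.smul_mem _ _ (mem_L c n w)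

lemma S0_pow_mem (c : ℂ) (n : ℕ) (w : Dinf) : S₀ c * (X c ^ n * phi c w) ∈ L c := by
  induction n with
  | zero =>
    rw [pow_zero, one_mul]
    have e : S₀ c * phi c w = X c ^ 0 * phi c (gb * w) := by
      rw [pow_zero, one_mul, map_mul]
      have : phi c gb = S₀ c := phi_inr c
      rw [this]
    rw [e]
    exact mem_L c 0 (gb * w)
  | succ n ih =>
    have e : X c ^ (n + 1) * phi c w = X c * (X c ^ n * phi c w) := by
      rw [pow_succ', mul_assoc]
    rw [e, ← mul_assoc, rel0', sub_mul, sub_mul, mul_assoc]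
    refine sub_mem (sub_mem ih (L_mulX c _ ih)) ?_
    rw [← Algebra.smul_def]
    exact Submodule.smul_mem _ _ (mem_L c n w)

lemma L_mulS1 (c : ℂ) : ∀ m ∈ L c, S₁ c * m ∈ L c := by
  intro m hm
  induction hm using Submodule.span_induction with
  | mem x hx => obtain ⟨⟨n, w⟩, rfl⟩ := hx; exact S1_pow_mem c n w
  | zero => simpa using (L c).zero_mem
  | add x y _ _ hx hy => rw [mul_add]; exact add_mem hx hy
  | smul a x _ hx => rw [mul_smul_comm]; exact Submodule.smul_mem _ a hx

lemma L_mulS0 (c : ℂ) : ∀ m ∈ L c, S₀ c * m ∈ L c := by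
  intro m hm
  induction hm using Submodule.span_induction with
  | mem x hx => obtain ⟨⟨n, w⟩, rfl⟩ := hx; exact S0_pow_mem c n w
  | zero => simpa using (L c).zero_mem
  | add x y _ _ hx hy => rw [mul_add]; exact add_mem hx hy
  | smul a x _ hx => rw [mul_smul_comm]; exact Submodule.smul_mem _ a hx

lemma mk_mul_mem (c : ℂ) (f : F) :
    ∀ m ∈ L c, RingQuot.mkRingHom (DahaRel c) f * m ∈ L c := by
  induction f using FreeAlgebra.induction with
  | grade0 r =>
    intro m hm
    rw [mk_algebraMap, ← Algebra.smul_def]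
    exact Submodule.smul_mem _ _ hm
  | grade1 x =>
    fin_cases x
    · exact L_mulX c
    · exact L_mulS1 c
    · exact L_mulS0 c
  | mul a b ha hb =>
    intro m hm
    rw [map_mul, mul_assoc]
    exact ha _ (hb _ hm)
  | add a b ha hb =>
    intro m hm
    rw [map_add, add_mul]
    exact add_mem (ha _ hm) (hb _ hm)

lemma span_top (c : ℂ) : L c = ⊤ := by
  rw [eq_top_iff]
  rintro h -
  obtain ⟨f, rfl⟩ := RingQuot.mkRingHom_surjective (DahaRel c) h
  have h1 : (1 : H c) ∈ L c := by
    have := mem_L c 0 1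
    simpa using this
  have h2 := mk_mul_mem c f 1 h1
  simpa using h2

lemma phi_inj (c : ℂ) : Function.Injective (phi c) := by
  intro w w' h
  have h2 : ((0, w) : ℕ × Dinf) = (0, w') := (li c).injective (by simp [h])
  exact (Prod.ext_iff.mp h2).2

end Span
/-- There is an (injective) monoid homomorphism `φ : D_∞ → H_c` sending the
two generating involutions to `s₁` and `s₀`, and the family `xⁿ · φ(w)` (for `n ∈ ℕ`,
`w ∈ D_∞`) is a `ℂ`-basis of `H_c`: it is linearly independent and spans.  In particular
`s₁, s₀` generate a subgroup of the unit group of `H_c` isomorphic to `D_∞`, and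
multiplication induces a vector-space isomorphism `ℂ[x] ⊗ ℂ[D_∞] ≅ H_c`. -/
theorem daha_pbw (c : ℂ) :
    ∃ φ : Dinf →* H c,
      φ (Monoid.Coprod.inl (Multiplicative.ofAdd (1 : ZMod 2))) = S₁ c ∧
      φ (Monoid.Coprod.inr (Multiplicative.ofAdd (1 : ZMod 2))) = S₀ c ∧
      Function.Injective φ ∧
      LinearIndependent ℂ (fun p : ℕ × Dinf => X c ^ p.1 * φ p.2) ∧
      Submodule.span ℂ (Set.range fun p : ℕ × Dinf => X c ^ p.1 * φ p.2) = ⊤ := by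
  exact ⟨phi c, phi_inl c, phi_inr c, phi_inj c, li c, span_top c⟩


end Stmt9
end

section
/- Let E be an ℕ-graded ring E = ⊕_{n≥0} E_n admitting a ℤ²-indexed exhaustive filtration compatible with multiplication such that the associated bigraded ring contains a commutative graded ℂ-subalgebra A of finite type with associated graded finitely generated as a left and right A-module. Then E is left and right noetherian. -/
universe u

open MulOpposite Finset
open scoped Classical DirectSum

set_option maxHeartbeats 1000000
set_option synthInstance.maxHeartbeats 400000

lemma engine_left {G : Type u} [Ring G] [Algebra ℂ G] (A : Subalgebra ℂ G)
    (hAcomm : ∀ x ∈ A, ∀ y ∈ A, x * y = y * x) (hAfg : A.FG)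
    (t : Finset G)
    (ht : ∀ g : G, g ∈ Submodule.span ℂ {x : G | ∃ a ∈ A, ∃ v ∈ t, x = a * v}) :
    IsNoetherianRing G := by
  letI : CommRing A := { (inferInstance : Ring A) with
    mul_comm := fun x y => Subtype.ext (hAcomm x x.2 y y.2) }
  haveI : Algebra.FiniteType ℂ A := (Subalgebra.fg_iff_finiteType A).mp hAfg
  haveI : IsNoetherianRing A := Algebra.FiniteType.isNoetherianRing ℂ A
  haveI : Module.Finite A G := by
    refine ⟨⟨t, eq_top_iff.mpr fun g _ => ?_⟩⟩
    have h1 := ht g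
    have h2 : {x : G | ∃ a ∈ A, ∃ v ∈ t, x = a * v} ⊆
        (Submodule.span A (t : Set G) : Set G) := by
      rintro x ⟨a, ha, v, hv, rfl⟩
      exact Submodule.smul_mem _ (⟨a, ha⟩ : A) (Submodule.subset_span hv)
    have h3 : Submodule.span ℂ {x : G | ∃ a ∈ A, ∃ v ∈ t, x = a * v} ≤
        (Submodule.span A (t : Set G)).restrictScalars ℂ :=
      Submodule.span_le.mpr h2
    exact h3 h1
  have : IsNoetherian A G := inferInstance
  exact isNoetherian_of_tower A this

lemma engine_right {G : Type u} [Ring G] [Algebra ℂ G] (A : Subalgebra ℂ G)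
    (hAcomm : ∀ x ∈ A, ∀ y ∈ A, x * y = y * x) (hAfg : A.FG)
    (t : Finset G)
    (ht : ∀ g : G, g ∈ Submodule.span ℂ {x : G | ∃ a ∈ A, ∃ v ∈ t, x = v * a}) :
    IsNoetherianRing Gᵐᵒᵖ := by
  classical
  -- the opposite subalgebra
  let A' : Subalgebra ℂ Gᵐᵒᵖ :=
    { carrier := unop ⁻¹' A
      mul_mem' := fun {_ _} hx hy => A.mul_mem hy hx
      add_mem' := fun {_ _} hx hy => A.add_mem hx hy
      algebraMap_mem' := fun r => A.algebraMap_mem r }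
  have hmemA' : ∀ x : Gᵐᵒᵖ, x ∈ A' ↔ unop x ∈ A := fun x => Iff.rfl
  have hA'comm : ∀ x ∈ A', ∀ y ∈ A', x * y = y * x := by
    intro x hx y hy
    apply unop_injective
    simp only [unop_mul]
    exact (hAcomm _ ((hmemA' x).mp hx) _ ((hmemA' y).mp hy)).symm
  have hA'fg : A'.FG := by
    obtain ⟨s, hs⟩ := hAfg
    refine ⟨s.image op, le_antisymm ?_ ?_⟩
    · rw [Algebra.adjoin_le_iff]
      intro x hx
      simp only [Finset.coe_image, Set.mem_image, Finset.mem_coe] at hx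
      obtain ⟨g, hg, rfl⟩ := hx
      show unop (op g) ∈ A
      simp only [unop_op]
      rw [← hs]
      exact Algebra.subset_adjoin hg
    · intro x hx
      have hx' : unop x ∈ A := hx
      rw [← hs] at hx'
      have key : ∀ g ∈ Algebra.adjoin ℂ (s : Set G),
          op g ∈ Algebra.adjoin ℂ ((s.image op : Finset Gᵐᵒᵖ) : Set Gᵐᵒᵖ) := by
        intro g hg
        induction hg using Algebra.adjoin_induction with
        | mem x hxx => exact Algebra.subset_adjoin (by
            simp only [Finset.coe_image, Set.mem_image, Finset.mem_coe]
            exact ⟨x, hxx, rfl⟩)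
        | algebraMap r =>
            rw [show (op (algebraMap ℂ G r)) = algebraMap ℂ Gᵐᵒᵖ r from rfl]
            exact Subalgebra.algebraMap_mem _ r
        | add x y _ _ hx hy => rw [op_add]; exact add_mem hx hy
        | mul x y _ _ hx hy => rw [op_mul]; exact mul_mem hy hx
      have := key (unop x) hx'
      rwa [op_unop] at this
  refine engine_left A' hA'comm hA'fg (t.image op) ?_
  intro g
  have h1 := ht (unop g)
  have h2 : op (unop g) ∈ Submodule.map (opLinearEquiv ℂ : G ≃ₗ[ℂ] Gᵐᵒᵖ).toLinearMap
      (Submodule.span ℂ {x : G | ∃ a ∈ A, ∃ v ∈ t, x = v * a}) :=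
    Submodule.mem_map_of_mem h1
  rw [op_unop, Submodule.map_span] at h2
  refine Submodule.span_mono ?_ h2
  rintro y ⟨x, ⟨a, ha, v, hv, rfl⟩, rfl⟩
  refine ⟨op a, ha, op v, Finset.mem_image_of_mem _ hv, ?_⟩
  simp

section Sigma
variable {E G : Type u} [Ring E] [Ring G]
variable (F : ℤ → ℤ → AddSubgroup E) (gr : ∀ n m : ℤ, F n m →+ G)

noncomputable def σf (n m : ℤ) (x : E) : G :=
  if h : x ∈ F n m then gr n m ⟨x, h⟩ else 0

lemma σf_of_mem {n m : ℤ} {x : E} (h : x ∈ F n m) : σf F gr n m x = gr n m ⟨x, h⟩ :=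
  dif_pos h

lemma σf_zero (n m : ℤ) : σf F gr n m 0 = 0 := by
  rw [σf_of_mem F gr (zero_mem _)]
  have : (⟨0, zero_mem (F n m)⟩ : F n m) = 0 := rfl
  rw [this, map_zero]

lemma σf_sub {n m : ℤ} {x y : E} (hx : x ∈ F n m) (hy : y ∈ F n m) :
    σf F gr n m (x - y) = σf F gr n m x - σf F gr n m y := by
  rw [σf_of_mem F gr (sub_mem hx hy), σf_of_mem F gr hx, σf_of_mem F gr hy]
  have : (⟨x - y, sub_mem hx hy⟩ : F n m) = ⟨x, hx⟩ - ⟨y, hy⟩ := rfl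
  rw [this, map_sub]

lemma σf_sum {ι : Type*} {n m : ℤ} (s : Finset ι) (f : ι → E)
    (hf : ∀ i ∈ s, f i ∈ F n m) :
    σf F gr n m (∑ i ∈ s, f i) = ∑ i ∈ s, σf F gr n m (f i) := by
  classical
  induction s using Finset.induction_on with
  | empty => simpa using σf_zero F gr n m
  | insert _ _ hnot ih =>
    rename_i a s
    rw [Finset.sum_insert hnot, Finset.sum_insert hnot]
    have h1 : f a ∈ F n m := hf a (Finset.mem_insert_self a s)
    have h2 : ∑ i ∈ s, f i ∈ F n m := sum_mem fun i hi => hf i (Finset.mem_insert_of_mem hi)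
    rw [σf_of_mem F gr (add_mem h1 h2), σf_of_mem F gr h1]
    have : (⟨f a + ∑ i ∈ s, f i, add_mem h1 h2⟩ : F n m) = ⟨f a, h1⟩ + ⟨_, h2⟩ := rfl
    rw [this, map_add, ← σf_of_mem F gr h2, ih fun i hi => hf i (Finset.mem_insert_of_mem hi)]

lemma σf_mul
    (hmul : ∀ (n m n' m' : ℤ) (a b : E), a ∈ F n m → b ∈ F n' m' →
      a * b ∈ F (n + n') (m + m'))
    (hgr_mul : ∀ (n m n' m' : ℤ) (a : F n m) (b : F n' m'),
      gr n m a * gr n' m' b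
        = gr (n + n') (m + m') ⟨(a : E) * b, hmul n m n' m' a b a.2 b.2⟩)
    {n m n' m' : ℤ} {x y : E} (hx : x ∈ F n m) (hy : y ∈ F n' m') :
    σf F gr n m x * σf F gr n' m' y = σf F gr (n + n') (m + m') (x * y) := by
  rw [σf_of_mem F gr hx, σf_of_mem F gr hy, hgr_mul,
    σf_of_mem F gr (hmul n m n' m' x y hx hy)]

lemma σf_congr {n m n' m' : ℤ} (x : E) (h1 : n = n') (h2 : m = m') :
    σf F gr n m x = σf F gr n' m' x := by subst h1; subst h2; rfl

lemma transfer
    (hneg : ∀ n m : ℤ, n < 0 ∨ m < 0 → F n m = ⊥)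
    (hmul : ∀ (n m n' m' : ℤ) (a b : E), a ∈ F n m → b ∈ F n' m' →
      a * b ∈ F (n + n') (m + m'))
    (hexh : ∀ a : E, ∃ n m, a ∈ F n m)
    (hker : ∀ (n m : ℤ) (a : F n m),
      gr n m a = 0 ↔ (a : E) ∈ F (n - 1) m ⊔ F n (m - 1))
    (hgr_mul : ∀ (n m n' m' : ℤ) (a : F n m) (b : F n' m'),
      gr n m a * gr n' m' b
        = gr (n + n') (m + m') ⟨(a : E) * b, hmul n m n' m' a b a.2 b.2⟩)
    (hproj : ∀ k : ℤ, ∃ π : G →+ G, ∀ (n m : ℤ) (a : F n m),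
      π (gr n m a) = if n + m = k then gr n m a else 0)
    (hcomp : ∀ n₀ m₀ : ℤ, ∃ π : G →+ G, ∀ (n m : ℤ) (a : F n m),
      π (gr n m a) = if n = n₀ ∧ m = m₀ then gr n m a else 0)
    (hsum : ∀ g : G, ∃ (s : Finset (ℤ × ℤ)) (b : ℤ × ℤ → E)
      (hb : ∀ p, b p ∈ F p.1 p.2), g = ∑ p ∈ s, gr p.1 p.2 ⟨b p, hb p⟩)
    (hG : IsNoetherianRing G) : IsNoetherianRing E := by
  classical
  -- σ-versions of the projections
  have hprojσ : ∀ k : ℤ, ∃ π : G →+ G, ∀ (n m : ℤ) (x : E),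
      π (σf F gr n m x) = if n + m = k then σf F gr n m x else 0 := by
    intro k
    obtain ⟨π, hπ⟩ := hproj k
    refine ⟨π, fun n m x => ?_⟩
    by_cases h : x ∈ F n m
    · rw [σf_of_mem F gr h, hπ]
    · rw [σf]; rw [dif_neg h]; simp
  have hcompσ : ∀ n₀ m₀ : ℤ, ∃ π : G →+ G, ∀ (n m : ℤ) (x : E),
      π (σf F gr n m x) = if n = n₀ ∧ m = m₀ then σf F gr n m x else 0 := by
    intro n₀ m₀
    obtain ⟨π, hπ⟩ := hcomp n₀ m₀
    refine ⟨π, fun n m x => ?_⟩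
    by_cases h : x ∈ F n m
    · rw [σf_of_mem F gr h, hπ]
    · rw [σf]; rw [dif_neg h]; simp
  have hsumσ : ∀ g : G, ∃ (s : Finset (ℤ × ℤ)) (b : ℤ × ℤ → E),
      (∀ p, b p ∈ F p.1 p.2) ∧ g = ∑ p ∈ s, σf F gr p.1 p.2 (b p) := by
    intro g
    obtain ⟨s, b, hb, hg⟩ := hsum g
    exact ⟨s, b, hb, by rw [hg]; exact Finset.sum_congr rfl fun p _ =>
      (σf_of_mem F gr (hb p)).symm⟩
  have hkerσ : ∀ (n m : ℤ) (x : E), x ∈ F n m → σf F gr n m x = 0 →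
      x ∈ F (n - 1) m ⊔ F n (m - 1) := by
    intro n m x hx h0
    rw [σf_of_mem F gr hx] at h0
    exact (hker n m ⟨x, hx⟩).mp h0
  rw [isNoetherianRing_iff_ideal_fg]
  intro I
  set X : Set G := { g | ∃ (k : ℕ) (d : ℕ → E), (∀ n : ℕ, d n ∈ F n ((k : ℤ) - n)) ∧
      (∑ n ∈ Finset.range (k+1), d n) ∈ I ∧
      g = ∑ n ∈ Finset.range (k+1), σf F gr n ((k : ℤ) - n) (d n) } with hXdef
  obtain ⟨s, hs⟩ := (IsNoetherian.noetherian (Submodule.span G X) : (Submodule.span G X).FG)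
  have hsubT : ∀ g ∈ s, ∃ T : Finset G, ↑T ⊆ X ∧ g ∈ Submodule.span G (T : Set G) := by
    intro g hg
    exact Submodule.mem_span_finite_of_mem_span (hs ▸ Submodule.subset_span hg)
  choose T hT1 hT2 using hsubT
  set X₀ : Finset G := s.attach.biUnion (fun g => T g.1 g.2) with hX₀def
  have hX₀X : (X₀ : Set G) ⊆ X := by
    intro v hv
    simp only [hX₀def, Finset.coe_biUnion, Set.mem_iUnion, Finset.mem_coe] at hv
    obtain ⟨g, hg, hvg⟩ := hv
    exact hT1 g.1 g.2 hvg
  have hspan : Submodule.span G X ≤ Submodule.span G (X₀ : Set G) := by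
    rw [← hs]
    rw [Submodule.span_le]
    intro g hg
    refine Submodule.span_le.mpr ?_ (hT2 g hg)
    intro v hv
    apply Submodule.subset_span
    simp only [hX₀def, Finset.coe_biUnion, Set.mem_iUnion, Finset.mem_coe]
    exact ⟨⟨g, hg⟩, s.mem_attach _, hv⟩
  -- choose data for members of X (extended to all of G)
  have hdata : ∀ v : G, ∃ (k : ℕ) (d : ℕ → E),
      (∀ n : ℕ, d n ∈ F n ((k : ℤ) - n)) ∧
      (∑ n ∈ Finset.range (k+1), d n) ∈ I ∧
      (v ∈ X → v = ∑ n ∈ Finset.range (k+1), σf F gr n ((k:ℤ) - n) (d n)) := by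
    intro v
    by_cases hv : v ∈ X
    · obtain ⟨k, d, h1, h2, h3⟩ := hv
      exact ⟨k, d, h1, h2, fun _ => h3⟩
    · refine ⟨0, fun _ => 0, fun n => zero_mem _, by simp, fun h => absurd h hv⟩
  choose kk dd hdd hddI hrepr using hdata
  set y : G → E := fun v => ∑ n ∈ Finset.range (kk v + 1), dd v n with hydef
  have hyI : ∀ v, y v ∈ I := fun v => hddI v
  refine ⟨X₀.image y, le_antisymm ?_ ?_⟩
  · rw [Ideal.span_le]
    intro x hx
    simp only [Finset.coe_image, Set.mem_image, Finset.mem_coe] at hx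
    obtain ⟨v, _, rfl⟩ := hx
    exact hyI v
  · -- I ≤ span of the y's
    have main : ∀ (k : ℕ) (a : E), a ∈ I →
        (∃ d : ℕ → E, (∀ n : ℕ, d n ∈ F n ((k:ℤ) - 1 - n)) ∧ a = ∑ n ∈ Finset.range k, d n) →
        a ∈ Ideal.span (↑(X₀.image y) : Set E) := by
      intro k
      induction k with
      | zero =>
        rintro a haI ⟨d, hd, rfl⟩
        simpa using Ideal.zero_mem _
      | succ k IH =>
        rintro a haI ⟨d, hd0, ha⟩
        have hd' : ∀ n : ℕ, d n ∈ F n ((k:ℤ) - n) := by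
          intro n
          have h := hd0 n
          have h2 : ((k+1:ℕ):ℤ) - 1 - n = (k:ℤ) - n := by push_cast; ring
          rwa [h2] at h
        set ξ : G := ∑ n ∈ Finset.range (k+1), σf F gr n ((k:ℤ) - n) (d n) with hξdef
        have hξX : ξ ∈ X := ⟨k, d, hd', by rwa [← ha], rfl⟩
        have hξ2 : ξ ∈ Submodule.span G (X₀ : Set G) := hspan (Submodule.subset_span hξX)
        rw [Submodule.mem_span_finset] at hξ2
        obtain ⟨f, -, hf⟩ := hξ2
        choose sv bv hbv hfv using fun v : G => hsumσ (f v)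
        obtain ⟨π, hπ⟩ := hprojσ (k : ℤ)
        set Q : G → Finset (ℤ × ℤ) :=
          fun v => (sv v).filter (fun p => p.1 + p.2 = (k:ℤ) - kk v) with hQdef
        have hQcond : ∀ v : G, ∀ p ∈ Q v, p.1 + p.2 = (k:ℤ) - kk v :=
          fun v p hp => (Finset.mem_filter.mp hp).2
        have hv_eq : ∀ v ∈ X₀, f v * v = ∑ p ∈ sv v, ∑ j ∈ Finset.range (kk v + 1),
            σf F gr (p.1 + j) (p.2 + ((kk v : ℤ) - j)) (bv v p * dd v j) := by
          intro v hv
          have e1 : f v * v = (∑ p ∈ sv v, σf F gr p.1 p.2 (bv v p)) *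
              (∑ j ∈ Finset.range (kk v + 1), σf F gr j ((kk v:ℤ) - j) (dd v j)) :=
            congrArg₂ (· * ·) (hfv v) (hrepr v (hX₀X hv))
          rw [e1, Finset.sum_mul_sum]
          refine Finset.sum_congr rfl fun p _ => Finset.sum_congr rfl fun j _ => ?_
          exact σf_mul F gr hmul hgr_mul (hbv v p) (hdd v j)
        have hπξ : π ξ = ξ := by
          rw [hξdef, map_sum]
          refine Finset.sum_congr rfl fun n _ => ?_
          rw [hπ, if_pos (by ring)]
        have key : ξ = ∑ v ∈ X₀, ∑ p ∈ Q v, ∑ j ∈ Finset.range (kk v + 1),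
            σf F gr (p.1 + j) ((k:ℤ) - (p.1 + j)) (bv v p * dd v j) := by
          conv_lhs => rw [← hπξ, ← hf]
          rw [map_sum]
          refine Finset.sum_congr rfl fun v hv => ?_
          rw [smul_eq_mul, hv_eq v hv, map_sum, hQdef]
          rw [Finset.sum_filter]
          refine Finset.sum_congr rfl fun p _ => ?_
          rw [map_sum]
          by_cases hcond : p.1 + p.2 = (k:ℤ) - kk v
          · rw [if_pos hcond]
            refine Finset.sum_congr rfl fun j _ => ?_
            rw [hπ, if_pos (by omega)]
            exact σf_congr F gr _ rfl (by omega)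
          · rw [if_neg hcond]
            refine Finset.sum_eq_zero fun j _ => ?_
            rw [hπ, if_neg (by omega)]
        set c : E := ∑ v ∈ X₀, ∑ p ∈ Q v, bv v p * y v with hcdef
        have hcspan : c ∈ Ideal.span (↑(X₀.image y) : Set E) := by
          refine Submodule.sum_mem _ fun v hv => Submodule.sum_mem _ fun p _ => ?_
          refine Ideal.mul_mem_left _ _ (Ideal.subset_span ?_)
          simp only [Finset.coe_image, Set.mem_image, Finset.mem_coe]
          exact ⟨v, hv, rfl⟩
        have hcI : c ∈ I := by
          refine Submodule.sum_mem _ fun v _ => Submodule.sum_mem _ fun p _ => ?_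
          exact I.smul_mem (bv v p) (hyI v)
        set e : ℕ → E := fun n => d n - ∑ v ∈ X₀, ∑ p ∈ Q v, ∑ j ∈ Finset.range (kk v + 1),
            (if (p.1 + (j:ℤ)) = (n:ℤ) then bv v p * dd v j else 0) with hedef
        have hbd_mem : ∀ v : G, ∀ p ∈ Q v, ∀ j : ℕ,
            bv v p * dd v j ∈ F (p.1 + (j:ℤ)) ((k:ℤ) - (p.1 + j)) := by
          intro v p hp j
          have h1 := hmul p.1 p.2 j ((kk v:ℤ) - j) _ _ (hbv v p) (hdd v j)
          have h2 : p.2 + ((kk v:ℤ) - j) = (k:ℤ) - (p.1 + j) := by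
            have := hQcond v p hp; omega
          rwa [h2] at h1
        have hSmem : ∀ n : ℕ, (∑ v ∈ X₀, ∑ p ∈ Q v, ∑ j ∈ Finset.range (kk v + 1),
            (if (p.1 + (j:ℤ)) = (n:ℤ) then bv v p * dd v j else 0)) ∈ F n ((k:ℤ) - n) := by
          intro n
          refine sum_mem fun v _ => sum_mem fun p hp => sum_mem fun j _ => ?_
          by_cases hij : (p.1 + (j:ℤ)) = (n:ℤ)
          · rw [if_pos hij]
            have h1 := hbd_mem v p hp j
            rwa [hij] at h1
          · rw [if_neg hij]; exact zero_mem _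
        have he_mem : ∀ n : ℕ, e n ∈ F n ((k:ℤ) - n) := fun n =>
          sub_mem (hd' n) (hSmem n)
        have hvanish : ∀ v : G, ∀ p ∈ Q v, ∀ j : ℕ,
            (p.1 + (j:ℤ) < 0 ∨ (k:ℤ) < p.1 + j) → bv v p * dd v j = 0 := by
          intro v p hp j hout
          have h1 := hbd_mem v p hp j
          have h2 : F (p.1 + (j:ℤ)) ((k:ℤ) - (p.1 + j)) = ⊥ := by
            apply hneg
            rcases hout with h | h
            · exact Or.inl h
            · exact Or.inr (by omega)
          rw [h2] at h1
          simpa using h1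
        have hinner : ∀ v : G, ∀ p ∈ Q v, ∀ j : ℕ,
            ∑ n ∈ Finset.range (k+1), (if (p.1 + (j:ℤ)) = (n:ℤ) then bv v p * dd v j else 0)
              = bv v p * dd v j := by
          intro v p hp j
          by_cases hin : 0 ≤ p.1 + (j:ℤ) ∧ p.1 + (j:ℤ) ≤ (k:ℤ)
          · rw [Finset.sum_eq_single ((p.1 + (j:ℤ)).toNat)]
            · rw [if_pos (by omega)]
            · intro b _ hb
              rw [if_neg (by omega)]
            · intro hnotin
              exfalso
              apply hnotin
              rw [Finset.mem_range]
              omega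
          · rw [Finset.sum_eq_zero, eq_comm]
            · exact hvanish v p hp j (by omega)
            · intro b hb
              rw [if_neg (by rw [Finset.mem_range] at hb; omega)]
        have hcexp : c = ∑ v ∈ X₀, ∑ p ∈ Q v, ∑ j ∈ Finset.range (kk v + 1),
            bv v p * dd v j := by
          rw [hcdef]
          refine Finset.sum_congr rfl fun v _ => Finset.sum_congr rfl fun p _ => ?_
          rw [hydef]
          exact Finset.mul_sum _ _ _
        have hsum_e : ∑ n ∈ Finset.range (k+1), e n = a - c := by
          simp only [hedef]
          rw [Finset.sum_sub_distrib, ← ha]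
          congr 1
          rw [Finset.sum_comm]
          rw [hcexp]
          refine Finset.sum_congr rfl fun v _ => ?_
          rw [Finset.sum_comm]
          refine Finset.sum_congr rfl fun p hp => ?_
          rw [Finset.sum_comm]
          exact Finset.sum_congr rfl fun j _ => hinner v p hp j
        have hσe_sum : ∑ n ∈ Finset.range (k+1), σf F gr n ((k:ℤ) - n) (e n) = 0 := by
          have expand : ∀ n : ℕ, σf F gr n ((k:ℤ)-n) (e n) =
              σf F gr n ((k:ℤ)-n) (d n) - ∑ v ∈ X₀, ∑ p ∈ Q v, ∑ j ∈ Finset.range (kk v + 1),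
                σf F gr n ((k:ℤ)-n) (if (p.1 + (j:ℤ)) = (n:ℤ) then bv v p * dd v j else 0) := by
            intro n
            simp only [hedef]
            rw [σf_sub F gr (hd' n) (hSmem n)]
            congr 1
            rw [σf_sum F gr _ _ (fun v hv => sum_mem fun p hp => sum_mem fun j hj => by
              by_cases hij : (p.1 + (j:ℤ)) = (n:ℤ)
              · rw [if_pos hij]
                have h1 := hbd_mem v p hp j
                rwa [hij] at h1
              · rw [if_neg hij]; exact zero_mem _)]
            refine Finset.sum_congr rfl fun v hv => ?_
            rw [σf_sum F gr _ _ (fun p hp => sum_mem fun j hj => by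
              by_cases hij : (p.1 + (j:ℤ)) = (n:ℤ)
              · rw [if_pos hij]
                have h1 := hbd_mem v p hp j
                rwa [hij] at h1
              · rw [if_neg hij]; exact zero_mem _)]
            refine Finset.sum_congr rfl fun p hp => ?_
            exact σf_sum F gr _ _ (fun j hj => by
              by_cases hij : (p.1 + (j:ℤ)) = (n:ℤ)
              · rw [if_pos hij]
                have h1 := hbd_mem v p hp j
                rwa [hij] at h1
              · rw [if_neg hij]; exact zero_mem _)
          have hinner2 : ∀ v : G, ∀ p ∈ Q v, ∀ j : ℕ,
              ∑ n ∈ Finset.range (k+1),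
                σf F gr n ((k:ℤ)-n) (if (p.1 + (j:ℤ)) = (n:ℤ) then bv v p * dd v j else 0)
              = σf F gr (p.1 + j) ((k:ℤ) - (p.1 + j)) (bv v p * dd v j) := by
            intro v p hp j
            by_cases hin : 0 ≤ p.1 + (j:ℤ) ∧ p.1 + (j:ℤ) ≤ (k:ℤ)
            · rw [Finset.sum_eq_single ((p.1 + (j:ℤ)).toNat)]
              · rw [if_pos (by omega)]
                exact σf_congr F gr _ (by omega) (by omega)
              · intro b _ hb
                rw [if_neg (by omega), σf_zero]
              · intro hnotin
                exfalso
                apply hnotin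
                rw [Finset.mem_range]
                omega
            · rw [Finset.sum_eq_zero, eq_comm]
              · rw [hvanish v p hp j (by omega), σf_zero]
              · intro b hb
                rw [if_neg (by rw [Finset.mem_range] at hb; omega), σf_zero]
          calc ∑ n ∈ Finset.range (k+1), σf F gr n ((k:ℤ) - n) (e n)
              = ξ - ∑ n ∈ Finset.range (k+1), ∑ v ∈ X₀, ∑ p ∈ Q v,
                  ∑ j ∈ Finset.range (kk v + 1),
                  σf F gr n ((k:ℤ)-n) (if (p.1 + (j:ℤ)) = (n:ℤ) then bv v p * dd v j else 0) := by
                rw [hξdef, ← Finset.sum_sub_distrib]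
                exact Finset.sum_congr rfl fun n _ => expand n
            _ = ξ - ξ := by
                congr 1
                rw [Finset.sum_comm, key]
                refine Finset.sum_congr rfl fun v _ => ?_
                rw [Finset.sum_comm]
                refine Finset.sum_congr rfl fun p hp => ?_
                rw [Finset.sum_comm]
                exact Finset.sum_congr rfl fun j _ => hinner2 v p hp j
            _ = 0 := sub_self ξ
        have hσe : ∀ n : ℕ, σf F gr n ((k:ℤ)-n) (e n) = 0 := by
          intro n₀
          by_cases hn₀ : n₀ ∈ Finset.range (k+1)
          · obtain ⟨π', hπ'⟩ := hcompσ (n₀ : ℤ) ((k:ℤ) - n₀)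
            have h0 := congrArg π' hσe_sum
            rw [map_sum, map_zero] at h0
            have hterm : ∀ n ∈ Finset.range (k+1),
                π' (σf F gr n ((k:ℤ)-n) (e n)) =
                  if n = n₀ then σf F gr n ((k:ℤ)-n) (e n) else 0 := by
              intro n _
              rw [hπ']
              by_cases hnn : n = n₀
              · rw [if_pos (by constructor <;> omega), if_pos hnn]
              · rw [if_neg (by intro hcc; exact hnn (by omega)), if_neg hnn]
            rw [Finset.sum_congr rfl hterm, Finset.sum_ite_eq' (Finset.range (k+1)) n₀] at h0
            rwa [if_pos hn₀] at h0
          · have he0 : e n₀ = 0 := by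
              have h1 := he_mem n₀
              rw [hneg (n₀:ℤ) ((k:ℤ) - n₀)
                (Or.inr (by rw [Finset.mem_range] at hn₀; omega))] at h1
              simpa using h1
            rw [he0, σf_zero]
        have hsplit : ∀ n : ℕ, ∃ u w : E, u ∈ F ((n:ℤ) - 1) ((k:ℤ) - n) ∧
            w ∈ F n ((k:ℤ) - n - 1) ∧ e n = u + w := by
          intro n
          have h := hkerσ n ((k:ℤ)-n) (e n) (he_mem n) (hσe n)
          rw [AddSubgroup.mem_sup] at h
          obtain ⟨u, hu, w, hw, huw⟩ := h
          exact ⟨u, w, hu, hw, huw.symm⟩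
        choose uu ww huu hww huw using hsplit
        have hac : a - c ∈ Ideal.span (↑(X₀.image y) : Set E) := by
          refine IH (a - c) (Submodule.sub_mem _ haI hcI) ⟨fun n => ww n + uu (n+1), ?_, ?_⟩
          · intro n
            beta_reduce
            refine add_mem ?_ ?_
            · have h1 := hww n
              have h2 : (k:ℤ) - n - 1 = (k:ℤ) - 1 - n := by ring
              rwa [h2] at h1
            · have h1 := huu (n+1)
              have h2 : ((n+1:ℕ):ℤ) - 1 = (n:ℤ) := by push_cast; ring
              have h3 : (k:ℤ) - ((n+1:ℕ):ℤ) = (k:ℤ) - 1 - n := by push_cast; ring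
              rwa [h2, h3] at h1
          · have hu0 : uu 0 = 0 := by
              have h1 := huu 0
              rw [hneg (((0:ℕ):ℤ) - 1) ((k:ℤ) - ((0:ℕ):ℤ)) (Or.inl (by norm_num))] at h1
              simpa using h1
            have hwk : ww k = 0 := by
              have h1 := hww k
              rw [hneg (k:ℤ) ((k:ℤ) - (k:ℕ) - 1) (Or.inr (by omega))] at h1
              simpa using h1
            have h1 : ∑ n ∈ Finset.range k, ww n = ∑ n ∈ Finset.range (k+1), ww n := by
              rw [Finset.sum_range_succ, hwk, add_zero]
            have h2 : ∑ n ∈ Finset.range k, uu (n+1) = ∑ n ∈ Finset.range (k+1), uu n := by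
              rw [Finset.sum_range_succ', hu0, add_zero]
            rw [← hsum_e]
            rw [Finset.sum_add_distrib, h1, h2, ← Finset.sum_add_distrib]
            exact (Finset.sum_congr rfl fun n _ => by rw [huw n, add_comm]).symm
        have hfinal := Submodule.add_mem (Ideal.span (↑(X₀.image y) : Set E)) hac hcspan
        rwa [sub_add_cancel] at hfinal
    intro a haI
    obtain ⟨n, m, hnm⟩ := hexh a
    by_cases hcase : n < 0 ∨ m < 0
    · have ha0 : a = 0 := by
        have h := hnm
        rw [hneg n m hcase] at h
        simpa using h
      rw [ha0]
      exact Ideal.zero_mem _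
    · push_neg at hcase
      obtain ⟨hn, hm⟩ := hcase
      refine main ((n + m).toNat + 1) a haI
        ⟨fun j => if (j:ℤ) = n then a else 0, ?_, ?_⟩
      · intro j
        beta_reduce
        by_cases hj : (j:ℤ) = n
        · rw [if_pos hj]
          have h2 : (((n + m).toNat + 1 : ℕ):ℤ) - 1 - j = m := by
            push_cast [Int.toNat_of_nonneg (by omega : (0:ℤ) ≤ n + m)]; omega
          rw [h2, hj]
          exact hnm
        · rw [if_neg hj]; exact zero_mem _
      · rw [Finset.sum_eq_single n.toNat]
        · rw [if_pos (by omega)]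
        · intro b _ hb
          rw [if_neg]
          omega
        · intro habs
          exfalso
          apply habs
          rw [Finset.mem_range]
          omega

end Sigma

section Internal
variable {E G : Type u} [Ring E] [Ring G]
variable (F : ℤ → ℤ → AddSubgroup E) (gr : ∀ n m : ℤ, F n m →+ G)

lemma internal_pi
    (hinternal : DirectSum.IsInternal fun p : ℤ × ℤ => (gr p.1 p.2).range)
    (P : ℤ × ℤ → Prop) [DecidablePred P] :
    ∃ π : G →+ G, ∀ (n m : ℤ) (a : F n m),
      π (gr n m a) = if P (n, m) then gr n m a else 0 := by
  classical
  let coe : (⨁ p : ℤ × ℤ, ((gr p.1 p.2).range : AddSubgroup G)) →+ G :=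
    DirectSum.coeAddMonoidHom (fun p : ℤ × ℤ => (gr p.1 p.2).range)
  let e : (⨁ p : ℤ × ℤ, ((gr p.1 p.2).range : AddSubgroup G)) ≃+ G :=
    AddEquiv.ofBijective coe hinternal
  let Φ : (⨁ p : ℤ × ℤ, ((gr p.1 p.2).range : AddSubgroup G)) →+ G :=
    DirectSum.toAddMonoid (fun p => if P p then ((gr p.1 p.2).range.subtype) else 0)
  refine ⟨AddMonoidHom.mk' (fun g => Φ (e.symm g)) (fun g h => by
    show Φ (e.symm (g + h)) = Φ (e.symm g) + Φ (e.symm h)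
    rw [e.symm.map_add, Φ.map_add]), ?_⟩
  intro n m a
  have hmem : gr n m a ∈ (gr n m).range := ⟨a, rfl⟩
  have hof : e.symm (gr n m a) =
      DirectSum.of (fun p : ℤ × ℤ => ((gr p.1 p.2).range : AddSubgroup G)) (n, m)
        ⟨gr n m a, hmem⟩ := by
    apply e.injective
    rw [AddEquiv.apply_symm_apply]
    exact (DirectSum.coeAddMonoidHom_of (fun q : ℤ × ℤ => ((gr q.1 q.2).range : AddSubgroup G))
      (n, m) ⟨gr n m a, hmem⟩).symm
  show Φ (e.symm (gr n m a)) = _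
  rw [hof]
  show DirectSum.toAddMonoid _ _ = _
  rw [DirectSum.toAddMonoid_of]
  by_cases hP : P (n, m)
  · simp only [hP, if_true]
    rfl
  · simp only [hP, if_false]
    rfl

lemma internal_sum
    (hinternal : DirectSum.IsInternal fun p : ℤ × ℤ => (gr p.1 p.2).range) :
    ∀ g : G, ∃ (s : Finset (ℤ × ℤ)) (b : ℤ × ℤ → E)
      (hb : ∀ p, b p ∈ F p.1 p.2), g = ∑ p ∈ s, gr p.1 p.2 ⟨b p, hb p⟩ := by
  classical
  have key : ∀ x : ⨁ p : ℤ × ℤ, ((gr p.1 p.2).range : AddSubgroup G),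
      ∃ (s : Finset (ℤ × ℤ)) (b : ℤ × ℤ → E) (hb : ∀ p, b p ∈ F p.1 p.2),
        (∀ p ∉ s, b p = 0) ∧
        DirectSum.coeAddMonoidHom (fun p : ℤ × ℤ => (gr p.1 p.2).range) x
          = ∑ p ∈ s, gr p.1 p.2 ⟨b p, hb p⟩ := by
    intro x
    induction x using DirectSum.induction_on with
    | zero =>
      refine ⟨∅, fun _ => 0, fun p => zero_mem _, fun _ _ => rfl, ?_⟩
      simp
    | of p z =>
      obtain ⟨a, ha⟩ := z.2
      refine ⟨{p}, fun q => if q = p then (a : E) else 0, ?_, ?_, ?_⟩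
      · intro q
        beta_reduce
        by_cases hq : q = p
        · subst hq; rw [if_pos rfl]; exact a.2
        · rw [if_neg hq]; exact zero_mem _
      · intro q hq
        beta_reduce
        rw [if_neg (by simpa using hq)]
      · rw [Finset.sum_singleton]
        have h1 : DirectSum.coeAddMonoidHom (fun q : ℤ × ℤ => ((gr q.1 q.2).range : AddSubgroup G))
            (DirectSum.of _ p z) = (z : G) :=
          DirectSum.coeAddMonoidHom_of (fun q : ℤ × ℤ => ((gr q.1 q.2).range : AddSubgroup G)) p z
        rw [h1, ← ha]
        exact (congrArg (gr p.1 p.2) (Subtype.ext (by simp))).symm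
    | add x y hx hy =>
      obtain ⟨sx, bx, hbx, hbx0, hgx⟩ := hx
      obtain ⟨sy, by_, hby, hby0, hgy⟩ := hy
      have hmem : ∀ p : ℤ × ℤ, bx p + by_ p ∈ F p.1 p.2 :=
        fun p => add_mem (hbx p) (hby p)
      refine ⟨sx ∪ sy, fun p => bx p + by_ p, hmem, ?_, ?_⟩
      · intro p hp
        beta_reduce
        rw [Finset.mem_union] at hp
        push_neg at hp
        rw [hbx0 p hp.1, hby0 p hp.2, add_zero]
      · rw [map_add, hgx, hgy]
        have hsplit : ∀ p : ℤ × ℤ,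
            gr p.1 p.2 ⟨bx p + by_ p, hmem p⟩
              = gr p.1 p.2 ⟨bx p, hbx p⟩ + gr p.1 p.2 ⟨by_ p, hby p⟩ := by
          intro p
          rw [show (⟨bx p + by_ p, hmem p⟩ : F p.1 p.2)
            = ⟨bx p, hbx p⟩ + ⟨by_ p, hby p⟩ from rfl, map_add]
        rw [Finset.sum_congr rfl fun p _ => hsplit p, Finset.sum_add_distrib]
        congr 1
        · rw [← Finset.sum_subset (Finset.subset_union_left : sx ⊆ sx ∪ sy)]
          intro p _ hp
          have h0 : (⟨bx p, hbx p⟩ : F p.1 p.2) = 0 := Subtype.ext (hbx0 p hp)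
          rw [h0, map_zero]
        · rw [← Finset.sum_subset (Finset.subset_union_right : sy ⊆ sx ∪ sy)]
          intro p _ hp
          have h0 : (⟨by_ p, hby p⟩ : F p.1 p.2) = 0 := Subtype.ext (hby0 p hp)
          rw [h0, map_zero]
  intro g
  obtain ⟨x, rfl⟩ := hinternal.surjective g
  obtain ⟨s, b, hb, _, hrep⟩ := key x
  exact ⟨s, b, hb, hrep⟩

end Internal

theorem bifiltered_transfer_noetherian
    (E : Type u) [Ring E] [Algebra ℂ E]
    (𝒜 : ℕ → Submodule ℂ E) [GradedRing 𝒜]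
    (F : ℤ → ℤ → AddSubgroup E)
    (hmono₁ : ∀ m, Monotone fun n => F n m) (hmono₂ : ∀ n, Monotone (F n))
    (hneg : ∀ n m : ℤ, n < 0 ∨ m < 0 → F n m = ⊥)
    (hone : (1 : E) ∈ F 0 0)
    (hmul : ∀ (n m n' m' : ℤ) (a b : E), a ∈ F n m → b ∈ F n' m' →
      a * b ∈ F (n + n') (m + m'))
    (hexh : ∀ a : E, ∃ n m, a ∈ F n m)
    (G : Type u) [Ring G] [Algebra ℂ G]
    (gr : ∀ n m : ℤ, F n m →+ G)
    (hker : ∀ (n m : ℤ) (a : F n m),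
      gr n m a = 0 ↔ (a : E) ∈ F (n - 1) m ⊔ F n (m - 1))
    (hgr_mul : ∀ (n m n' m' : ℤ) (a : F n m) (b : F n' m'),
      gr n m a * gr n' m' b
        = gr (n + n') (m + m') ⟨(a : E) * b, hmul n m n' m' a b a.2 b.2⟩)
    (hgr_one : gr 0 0 ⟨1, hone⟩ = 1)
    (hinternal : DirectSum.IsInternal fun p : ℤ × ℤ => (gr p.1 p.2).range)
    (A : Subalgebra ℂ G) (hAcomm : ∀ x ∈ A, ∀ y ∈ A, x * y = y * x) (hAfg : A.FG)
    (hleft : ∃ t : Finset G, ∀ g : G,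
      g ∈ Submodule.span ℂ {x : G | ∃ a ∈ A, ∃ v ∈ t, x = a * v})
    (hright : ∃ t : Finset G, ∀ g : G,
      g ∈ Submodule.span ℂ {x : G | ∃ a ∈ A, ∃ v ∈ t, x = v * a}) :
    IsNoetherianRing E ∧ IsNoetherianRing Eᵐᵒᵖ := by
  classical
  obtain ⟨t, ht⟩ := hleft
  obtain ⟨t', ht'⟩ := hright
  have hGnoeth : IsNoetherianRing G := engine_left A hAcomm hAfg t ht
  have hGopnoeth : IsNoetherianRing Gᵐᵒᵖ := engine_right A hAcomm hAfg t' ht'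
  constructor
  · refine transfer F gr hneg hmul hexh hker hgr_mul ?_ ?_ ?_ hGnoeth
    · intro k
      exact internal_pi F gr hinternal (fun p => p.1 + p.2 = k)
    · intro n₀ m₀
      exact internal_pi F gr hinternal (fun p => p.1 = n₀ ∧ p.2 = m₀)
    · exact internal_sum F gr hinternal
  · -- the opposite side
    set uo : Eᵐᵒᵖ →+ E := (opAddEquiv : E ≃+ Eᵐᵒᵖ).symm.toAddMonoidHom with huo
    set F' : ℤ → ℤ → AddSubgroup Eᵐᵒᵖ := fun n m => (F n m).comap uo with hF'
    have hmemF' : ∀ (n m : ℤ) (x : Eᵐᵒᵖ), x ∈ F' n m ↔ unop x ∈ F n m := fun n m x => Iff.rfl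
    set gr' : ∀ n m : ℤ, F' n m →+ Gᵐᵒᵖ := fun n m => AddMonoidHom.mk'
      (fun a => op (gr n m ⟨unop (a : Eᵐᵒᵖ), a.2⟩))
      (fun a b => by
        show op (gr n m ⟨unop ((a : Eᵐᵒᵖ) + b), add_mem a.2 b.2⟩)
          = op (gr n m ⟨unop (a : Eᵐᵒᵖ), a.2⟩) + op (gr n m ⟨unop (b : Eᵐᵒᵖ), b.2⟩)
        have h1 : (⟨unop ((a : Eᵐᵒᵖ) + b), add_mem a.2 b.2⟩ : F n m)
            = ⟨unop (a : Eᵐᵒᵖ), a.2⟩ + ⟨unop (b : Eᵐᵒᵖ), b.2⟩ := rfl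
        rw [h1, map_add, op_add]) with hgr'
    have hgr'app : ∀ (n m : ℤ) (a : F' n m),
        gr' n m a = op (gr n m ⟨unop (a : Eᵐᵒᵖ), a.2⟩) := fun n m a => rfl
    -- index congruence for gr
    have grc : ∀ (n m n' m' : ℤ), n = n' → m = m' → ∀ (x : E) (hx : x ∈ F n m)
        (hx' : x ∈ F n' m'), gr n m ⟨x, hx⟩ = gr n' m' ⟨x, hx'⟩ := by
      intro n m n' m' h1 h2 x hx hx'
      subst h1; subst h2; rfl
    -- hypotheses for transfer on the opposite side
    have hneg' : ∀ n m : ℤ, n < 0 ∨ m < 0 → F' n m = ⊥ := by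
      intro n m h
      ext x
      rw [hmemF', hneg n m h]
      simp only [AddSubgroup.mem_bot]
      constructor
      · intro h0
        rw [← op_unop x, h0, op_zero]
      · intro h0
        rw [h0, unop_zero]
    have hmul' : ∀ (n m n' m' : ℤ) (a b : Eᵐᵒᵖ), a ∈ F' n m → b ∈ F' n' m' →
        a * b ∈ F' (n + n') (m + m') := by
      intro n m n' m' a b ha hb
      rw [hmemF'] at ha hb ⊢
      have h1 : unop (a * b) = unop b * unop a := rfl
      rw [h1]
      have h2 := hmul n' m' n m (unop b) (unop a) hb ha
      rwa [add_comm n' n, add_comm m' m] at h2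
    have hexh' : ∀ a : Eᵐᵒᵖ, ∃ n m, a ∈ F' n m := by
      intro a
      obtain ⟨n, m, h⟩ := hexh (unop a)
      exact ⟨n, m, (hmemF' n m a).mpr h⟩
    have hsup' : ∀ (H K : AddSubgroup E) (x : Eᵐᵒᵖ),
        x ∈ H.comap uo ⊔ K.comap uo ↔ unop x ∈ H ⊔ K := by
      intro H K x
      rw [AddSubgroup.mem_sup, AddSubgroup.mem_sup]
      constructor
      · rintro ⟨u, hu, w, hw, hx⟩
        exact ⟨unop u, hu, unop w, hw, by rw [← hx]; rfl⟩
      · rintro ⟨u, hu, w, hw, hx⟩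
        refine ⟨op u, ?_, op w, ?_, ?_⟩
        · show unop (op u) ∈ H
          rwa [unop_op]
        · show unop (op w) ∈ K
          rwa [unop_op]
        · rw [← op_unop x, ← hx, op_add]
    have hker' : ∀ (n m : ℤ) (a : F' n m),
        gr' n m a = 0 ↔ (a : Eᵐᵒᵖ) ∈ F' (n - 1) m ⊔ F' n (m - 1) := by
      intro n m a
      rw [hgr'app]
      rw [show (0 : Gᵐᵒᵖ) = op 0 from rfl]
      rw [op_inj]
      rw [hker n m ⟨unop (a : Eᵐᵒᵖ), a.2⟩]
      exact (hsup' (F (n-1) m) (F n (m-1)) (a : Eᵐᵒᵖ)).symm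
    have hgr_mul' : ∀ (n m n' m' : ℤ) (a : F' n m) (b : F' n' m'),
        gr' n m a * gr' n' m' b
          = gr' (n + n') (m + m') ⟨(a : Eᵐᵒᵖ) * b, hmul' n m n' m' a b a.2 b.2⟩ := by
      intro n m n' m' a b
      rw [hgr'app, hgr'app, hgr'app]
      rw [show op (gr n m ⟨unop (a : Eᵐᵒᵖ), a.2⟩) * op (gr n' m' ⟨unop (b : Eᵐᵒᵖ), b.2⟩)
        = op (gr n' m' ⟨unop (b : Eᵐᵒᵖ), b.2⟩ * gr n m ⟨unop (a : Eᵐᵒᵖ), a.2⟩) from rfl]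
      rw [op_inj]
      rw [hgr_mul n' m' n m ⟨unop (b : Eᵐᵒᵖ), b.2⟩ ⟨unop (a : Eᵐᵒᵖ), a.2⟩]
      exact grc (n' + n) (m' + m) (n + n') (m + m') (add_comm n' n) (add_comm m' m) _ _ _
    refine transfer F' gr' hneg' hmul' hexh' hker' hgr_mul' ?_ ?_ ?_ hGopnoeth
    · intro k
      obtain ⟨π, hπ⟩ := internal_pi F gr hinternal (fun p => p.1 + p.2 = k)
      refine ⟨AddMonoidHom.mk' (fun g => op (π (unop g))) (fun g h => by
        show op (π (unop (g + h))) = op (π (unop g)) + op (π (unop h))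
        rw [show unop (g + h) = unop g + unop h from rfl, map_add, op_add]), ?_⟩
      intro n m a
      show op (π (unop (gr' n m a))) = _
      rw [hgr'app, unop_op, hπ]
      by_cases hc : n + m = k
      · rw [if_pos hc, if_pos hc]
      · rw [if_neg hc, if_neg hc, op_zero]
    · intro n₀ m₀
      obtain ⟨π, hπ⟩ := internal_pi F gr hinternal (fun p => p.1 = n₀ ∧ p.2 = m₀)
      refine ⟨AddMonoidHom.mk' (fun g => op (π (unop g))) (fun g h => by
        show op (π (unop (g + h))) = op (π (unop g)) + op (π (unop h))
        rw [show unop (g + h) = unop g + unop h from rfl, map_add, op_add]), ?_⟩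
      intro n m a
      show op (π (unop (gr' n m a))) = _
      rw [hgr'app, unop_op, hπ]
      by_cases hc : n = n₀ ∧ m = m₀
      · rw [if_pos hc, if_pos hc]
      · rw [if_neg hc, if_neg hc, op_zero]
    · intro g
      obtain ⟨s, b, hb, hrep⟩ := internal_sum F gr hinternal (unop g)
      have hb' : ∀ p : ℤ × ℤ, op (b p) ∈ F' p.1 p.2 := by
        intro p
        rw [hmemF', unop_op]
        exact hb p
      refine ⟨s, fun p => op (b p), hb', ?_⟩
      rw [← op_unop g, hrep, op_sum]
      refine Finset.sum_congr rfl fun p _ => ?_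
      rw [hgr'app]
      rw [op_inj]
      exact grc p.1 p.2 p.1 p.2 rfl rfl _ _ _
end
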